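/- arXiv:2007.07433 — 7 statements merged into one kernel-verified Lean document; each statement's English description precedes it below -/
import Mathlib

section
/- For X positive semidefinite and x ∈ ℝⁿ, x lies in the range of X if and only if there exists ε > 0 such that X − ε·xxᵀ is positive semidefinite. -/
open Matrix Set

noncomputable section

/-- The set of rank-one (outer product) matrices `x xᵀ`. -/
def RankOneSet (n : ℕ) : Set (Matrix (Fin n) (Fin n) ℝ) :=
  {X | ∃ x : Fin n → ℝ, X = vecMulVec x x}

/-- A set of PSD matrices is rank-one generated if it equals the convex hull of its
rank-one members. -/
def IsROG {n : ℕ} (S : Set (Matrix (Fin n) (Fin n) ℝ)) : Prop :=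
  S = convexHull ℝ (S ∩ RankOneSet n)

/-- `ℝ₊X` is an extreme ray of `S`: `X ∈ S`, `X ≠ 0`, and whenever `X = (Y+Z)/2` with
`Y, Z ∈ S`, both `Y` and `Z` lie on the ray `ℝ₊X`. -/
def IsExtremeRay' {n : ℕ} (S : Set (Matrix (Fin n) (Fin n) ℝ))
    (X : Matrix (Fin n) (Fin n) ℝ) : Prop :=
  X ∈ S ∧ X ≠ 0 ∧ ∀ Y ∈ S, ∀ Z ∈ S, X = (1/2 : ℝ) • (Y + Z) →
    (∃ α : ℝ, 0 ≤ α ∧ Y = α • X) ∧ (∃ β : ℝ, 0 ≤ β ∧ Z = β • X)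

/-- `S(𝓜) = {X ⪰ 0 : ⟨N, X⟩ ≥ 0 ∀ N ∈ 𝓜}` with the trace inner product. -/
def SCone {n : ℕ} (𝓜 : Set (Matrix (Fin n) (Fin n) ℝ)) : Set (Matrix (Fin n) (Fin n) ℝ) :=
  {X | X.PosSemidef ∧ ∀ N ∈ 𝓜, 0 ≤ (N * X).trace}

/-- `T(𝓜) = {X ⪰ 0 : ⟨N, X⟩ = 0 ∀ N ∈ 𝓜}` with the trace inner product. -/
def TCone {n : ℕ} (𝓜 : Set (Matrix (Fin n) (Fin n) ℝ)) : Set (Matrix (Fin n) (Fin n) ℝ) :=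
  {X | X.PosSemidef ∧ ∀ N ∈ 𝓜, (N * X).trace = 0}


lemma sym_dot {n : ℕ} {X : Matrix (Fin n) (Fin n) ℝ} (h : X.IsHermitian) (y z : Fin n → ℝ) :
    y ⬝ᵥ X *ᵥ z = z ⬝ᵥ X *ᵥ y := by
  rw [dotProduct_mulVec, ← mulVec_transpose, dotProduct_comm,
    ← conjTranspose_eq_transpose_of_trivial, h.eq]

lemma vecMulVec_mulVec' {n : ℕ} (x z : Fin n → ℝ) : vecMulVec x x *ᵥ z = (x ⬝ᵥ z) • x := by
  funext i
  simp only [vecMulVec_apply, mulVec, dotProduct, Pi.smul_apply, smul_eq_mul, Finset.sum_mul]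
  exact Finset.sum_congr rfl fun j _ => by ring

lemma cs {n : ℕ} {X : Matrix (Fin n) (Fin n) ℝ} (hX : X.PosSemidef) (y z : Fin n → ℝ) :
    (y ⬝ᵥ X *ᵥ z)^2 ≤ (y ⬝ᵥ X *ᵥ y) * (z ⬝ᵥ X *ᵥ z) := by
  have h : ∀ t : ℝ, 0 ≤ (z ⬝ᵥ X *ᵥ z) * (t * t) + (2 * (y ⬝ᵥ X *ᵥ z)) * t + (y ⬝ᵥ X *ᵥ y) := by
    intro t
    have h0 := hX.dotProduct_mulVec_nonneg (y + t • z)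
    simp only [star_trivial, dotProduct_add, add_dotProduct, mulVec_add, mulVec_smul,
      dotProduct_smul, smul_dotProduct, smul_eq_mul] at h0
    rw [← sym_dot hX.1 y z] at h0
    ring_nf at h0 ⊢
    linarith
  have := discrim_le_zero h
  rw [discrim] at this
  nlinarith [this]

theorem stmt_1 {n : ℕ} (X : Matrix (Fin n) (Fin n) ℝ) (hX : X.PosSemidef) (x : Fin n → ℝ) :
    (∃ y : Fin n → ℝ, X.mulVec y = x) ↔
      ∃ ε : ℝ, 0 < ε ∧ (X - ε • vecMulVec x x).PosSemidef := by
  constructor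
  · rintro ⟨y, rfl⟩
    set c := y ⬝ᵥ X *ᵥ y with hc
    have hc0 : 0 ≤ c := by simpa using hX.dotProduct_mulVec_nonneg y
    have hH : (vecMulVec (X *ᵥ y) (X *ᵥ y)).IsHermitian := by
      ext i j
      simp [vecMulVec_apply, conjTranspose_apply, mul_comm]
    rcases eq_or_lt_of_le hc0 with h0 | hpos
    · have hz : X *ᵥ y = 0 := by
        have := (hX.dotProduct_mulVec_zero_iff y)
        simp only [star_trivial] at this
        exact this.1 h0.symm
      refine ⟨1, one_pos, ?_⟩
      have hv0 : vecMulVec (X *ᵥ y) (X *ᵥ y) = 0 := by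
        rw [hz]; ext i j; simp [vecMulVec_apply]
      rw [hv0, smul_zero, sub_zero]
      exact hX
    · refine ⟨1/c, by positivity, ?_⟩
      refine Matrix.PosSemidef.of_dotProduct_mulVec_nonneg ?_ ?_
      · refine hX.1.sub ?_
        rw [Matrix.IsHermitian, conjTranspose_smul, hH.eq]
        simp
      · intro z
        simp only [star_trivial, sub_mulVec, dotProduct_sub, smul_mulVec,
          dotProduct_smul, vecMulVec_mulVec', smul_eq_mul, sub_nonneg]
        have hd : (X *ᵥ y) ⬝ᵥ z = y ⬝ᵥ X *ᵥ z := by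
          rw [dotProduct_comm (X *ᵥ y) z, sym_dot hX.1 z y]
        have hcs := cs hX y z
        have hz0 : 0 ≤ z ⬝ᵥ X *ᵥ z := by simpa using hX.dotProduct_mulVec_nonneg z
        rw [hd, dotProduct_comm z (X *ᵥ y), hd]
        rw [div_mul_eq_mul_div, div_le_iff₀ hpos] at *
        nlinarith [hcs]
  · rintro ⟨ε, hε, hPSD⟩
    have key : ∀ z : Fin n → ℝ, X *ᵥ z = 0 → x ⬝ᵥ z = 0 := by
      intro z hz
      have h0 := hPSD.dotProduct_mulVec_nonneg z
      simp only [star_trivial, sub_mulVec, dotProduct_sub, smul_mulVec,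
        dotProduct_smul, vecMulVec_mulVec', smul_eq_mul, hz, dotProduct_zero,
        dotProduct_comm z x] at h0
      have h1 : (x ⬝ᵥ z) * (x ⬝ᵥ z) ≤ 0 := by nlinarith [h0, mul_self_nonneg (x ⬝ᵥ z)]
      exact mul_self_eq_zero.mp (le_antisymm h1 (mul_self_nonneg _))
    set T := Matrix.toEuclideanLin (𝕜 := ℝ) X with hT
    have hsym : T.IsSymmetric := Matrix.isHermitian_iff_isSymmetric.1 hX.1
    have hle : LinearMap.range T ≤ (LinearMap.ker T)ᗮ := by
      rintro u ⟨w, rfl⟩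
      rw [Submodule.mem_orthogonal]
      intro v hv
      rw [LinearMap.mem_ker] at hv
      rw [real_inner_comm, hsym w v, hv, inner_zero_right]
    have heq : LinearMap.range T = (LinearMap.ker T)ᗮ := by
      apply Submodule.eq_of_le_of_finrank_eq hle
      have h1 := LinearMap.finrank_range_add_finrank_ker T
      have h2 := Submodule.finrank_add_finrank_orthogonal (LinearMap.ker T)
      rw [finrank_euclideanSpace, Fintype.card_fin] at *
      omega
    have hx : (WithLp.equiv 2 (Fin n → ℝ)).symm x ∈ (LinearMap.ker T)ᗮ := by
      rw [Submodule.mem_orthogonal]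
      intro v hv
      rw [LinearMap.mem_ker] at hv
      have hv' : X *ᵥ (WithLp.equiv 2 (Fin n → ℝ)) v = 0 := by
        have := congrArg (WithLp.equiv 2 (Fin n → ℝ)) hv
        rw [show ∀ u, (WithLp.equiv 2 (Fin n → ℝ)) (T u) = X *ᵥ (WithLp.equiv 2 (Fin n → ℝ)) u from fun _ => rfl] at this
        simpa using this
      have hk := key _ hv'
      rw [PiLp.inner_apply]
      simpa [dotProduct, mul_comm] using hk
    rw [← heq] at hx
    obtain ⟨w, hw⟩ := hx
    refine ⟨(WithLp.equiv 2 (Fin n → ℝ)) w, ?_⟩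
    have := congrArg (WithLp.equiv 2 (Fin n → ℝ)) hw
    rwa [show ∀ u, (WithLp.equiv 2 (Fin n → ℝ)) (T u) = X *ᵥ (WithLp.equiv 2 (Fin n → ℝ)) u from fun _ => rfl, Equiv.apply_symm_apply] at this
end
end

section
/- Let M ⊆ S^n, let ℝ₊X be an extreme ray of S(M), and let M' ⊆ M contain all constraints tight at X (i.e., {M ∈ M : ⟨M,X⟩ = 0} ⊆ M'). If M \ M' is compact, then ℝ₊X is an extreme ray of S(M'). If moreover M' = {M ∈ M : ⟨M,X⟩ = 0}, then ℝ₊X is an extreme ray of T(M') = {X ⪰ 0 : ⟨M,X⟩ = 0 ∀M ∈ M'}. -/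
open Matrix Set

noncomputable section

-- auxiliary lemmas
section Aux

lemma psd_smul {n : ℕ} {c : ℝ} (hc : 0 ≤ c) {X : Matrix (Fin n) (Fin n) ℝ}
    (hX : X.PosSemidef) : (c • X).PosSemidef := by
  refine ⟨?_, fun x => ?_⟩
  · unfold Matrix.IsHermitian
    ext i j
    simp only [conjTranspose_apply, Matrix.smul_apply, smul_eq_mul, star_trivial]
    rw [show X j i = X i j from hX.1.apply i j]
  · exact (hX.smul hc).2 x

lemma psd_trace_nonneg {n : ℕ} {X : Matrix (Fin n) (Fin n) ℝ} (hX : X.PosSemidef) :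
    0 ≤ X.trace := by
  exact hX.trace_nonneg

lemma psd_trace_pos {n : ℕ} {X : Matrix (Fin n) (Fin n) ℝ} (hX : X.PosSemidef)
    (h0 : X ≠ 0) : 0 < X.trace := by
  exact lt_of_le_of_ne hX.trace_nonneg (fun h => h0 (hX.trace_eq_zero_iff.mp h.symm))

lemma cont_trace {n : ℕ} (X : Matrix (Fin n) (Fin n) ℝ) :
    Continuous fun N : Matrix (Fin n) (Fin n) ℝ => (N * X).trace :=
  (continuous_id.matrix_mul continuous_const).matrix_trace

lemma key {n : ℕ} (𝓜 𝓜' : Set (Matrix (Fin n) (Fin n) ℝ)) (hsub : 𝓜' ⊆ 𝓜)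
    (X : Matrix (Fin n) (Fin n) ℝ)
    (hXS : X ∈ {X | X.PosSemidef ∧ ∀ N ∈ 𝓜, 0 ≤ (N * X).trace})
    (hX0 : X ≠ 0)
    (hext : ∀ Y ∈ {X | X.PosSemidef ∧ ∀ N ∈ 𝓜, 0 ≤ (N * X).trace},
      ∀ Z ∈ {X | X.PosSemidef ∧ ∀ N ∈ 𝓜, 0 ≤ (N * X).trace}, X = (1/2 : ℝ) • (Y + Z) →
      (∃ α : ℝ, 0 ≤ α ∧ Y = α • X) ∧ (∃ β : ℝ, 0 ≤ β ∧ Z = β • X))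
    (htight : {N | N ∈ 𝓜 ∧ (N * X).trace = 0} ⊆ 𝓜')
    (hcomp : IsCompact (𝓜 \ 𝓜'))
    (Y : Matrix (Fin n) (Fin n) ℝ)
    (hY : Y.PosSemidef ∧ ∀ N ∈ 𝓜', 0 ≤ (N * Y).trace)
    (Z : Matrix (Fin n) (Fin n) ℝ)
    (hZ : Z.PosSemidef ∧ ∀ N ∈ 𝓜', 0 ≤ (N * Z).trace)
    (hXYZ : X = (1/2 : ℝ) • (Y + Z)) :
    (∃ α : ℝ, 0 ≤ α ∧ Y = α • X) ∧ (∃ β : ℝ, 0 ≤ β ∧ Z = β • X) := by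
  have hXpsd := hXS.1
  have htX : 0 < X.trace := psd_trace_pos hXpsd hX0
  -- choose the perturbation parameter t
  obtain ⟨t, ht0, ht1, htK⟩ : ∃ t : ℝ, 0 < t ∧ t ≤ 1 ∧ ∀ N ∈ 𝓜 \ 𝓜',
      0 ≤ (N * X).trace + t * ((N * Y).trace - (N * X).trace) ∧
      0 ≤ (N * X).trace + t * ((N * Z).trace - (N * X).trace) := by
    rcases (𝓜 \ 𝓜').eq_empty_or_nonempty with hemp | hne
    · exact ⟨1, one_pos, le_refl 1, fun N hN => by rw [hemp] at hN; exact absurd hN (Set.notMem_empty N)⟩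
    · obtain ⟨N₀, hN₀, hmin⟩ := hcomp.exists_isMinOn hne (cont_trace X).continuousOn
      set c := (N₀ * X).trace with hc
      have hcpos : 0 < c := by
        have h1 : 0 ≤ c := hXS.2 N₀ hN₀.1
        rcases h1.lt_or_eq with h | h
        · exact h
        · exact absurd (htight ⟨hN₀.1, h.symm⟩) hN₀.2
      obtain ⟨C₁, hC₁⟩ := hcomp.exists_bound_of_continuousOn
        ((cont_trace Y).sub (cont_trace X)).continuousOn
      obtain ⟨C₂, hC₂⟩ := hcomp.exists_bound_of_continuousOn
        ((cont_trace Z).sub (cont_trace X)).continuousOn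
      have hC₁0 : 0 ≤ C₁ := le_trans (norm_nonneg _) (hC₁ N₀ hN₀)
      have hC₂0 : 0 ≤ C₂ := le_trans (norm_nonneg _) (hC₂ N₀ hN₀)
      set D := C₁ + C₂ + 1 with hD
      have hD0 : 0 < D := by positivity
      refine ⟨min 1 (c / D), lt_min one_pos (by positivity), min_le_left _ _, fun N hN => ?_⟩
      have hcle : c ≤ (N * X).trace := hmin hN
      have h1 := (abs_le.mp (by simpa [Real.norm_eq_abs] using hC₁ N hN)).1
      have h2 := (abs_le.mp (by simpa [Real.norm_eq_abs] using hC₂ N hN)).1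
      set t := min 1 (c / D) with htdef
      have ht0 : 0 < t := lt_min one_pos (by positivity)
      have htD : t * D ≤ c := by
        have : t ≤ c / D := min_le_right _ _
        calc t * D ≤ (c / D) * D := by nlinarith
        _ = c := by field_simp
      constructor
      · nlinarith [mul_le_mul_of_nonneg_left h1 ht0.le]
      · nlinarith [mul_le_mul_of_nonneg_left h2 ht0.le]
  -- the perturbed matrices
  set Y' := X + t • (Y - X) with hY'def
  set Z' := X + t • (Z - X) with hZ'def
  have hYZ2 : Y + Z = (2:ℝ) • X := by rw [hXYZ]; module
  have hsum : X = (1/2 : ℝ) • (Y' + Z') := by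
    have h : Y' + Z' = (2:ℝ) • X + t • ((Y + Z) - (2:ℝ) • X) := by
      rw [hY'def, hZ'def]; module
    rw [h, hYZ2, sub_self, smul_zero, add_zero]; module
  have hY'eq : Y' = (1 - t) • X + t • Y := by rw [hY'def]; module
  have hZ'eq : Z' = (1 - t) • X + t • Z := by rw [hZ'def]; module
  have htr : ∀ W : Matrix (Fin n) (Fin n) ℝ, ∀ N : Matrix (Fin n) (Fin n) ℝ,
      (N * (X + t • (W - X))).trace = (N * X).trace + t * ((N * W).trace - (N * X).trace) := by
    intro W N
    simp [Matrix.mul_add, Matrix.mul_sub, Matrix.mul_smul, Matrix.trace_add, Matrix.trace_sub,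
      Matrix.trace_smul, smul_eq_mul]
  have hmem : ∀ W : Matrix (Fin n) (Fin n) ℝ,
      (W.PosSemidef ∧ ∀ N ∈ 𝓜', 0 ≤ (N * W).trace) →
      (∀ N ∈ 𝓜 \ 𝓜', 0 ≤ (N * X).trace + t * ((N * W).trace - (N * X).trace)) →
      (X + t • (W - X)) ∈ {V : Matrix (Fin n) (Fin n) ℝ | V.PosSemidef ∧ ∀ N ∈ 𝓜, 0 ≤ (N * V).trace} := by
    intro W hW hWK
    constructor
    · have : X + t • (W - X) = (1 - t) • X + t • W := by module
      rw [this]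
      exact (psd_smul (by linarith) hXpsd).add (psd_smul ht0.le hW.1)
    · intro N hN
      rw [htr W N]
      by_cases hN' : N ∈ 𝓜'
      · have h1 := hXS.2 N hN
        have h2 := hW.2 N hN'
        nlinarith
      · exact hWK N ⟨hN, hN'⟩
  have hYmem := hmem Y hY fun N hN => (htK N hN).1
  have hZmem := hmem Z hZ fun N hN => (htK N hN).2
  obtain ⟨⟨α, hα, hYα⟩, ⟨β, hβ, hZβ⟩⟩ := hext Y' hYmem Z' hZmem hsum
  -- solve back for Y and Z
  have solve : ∀ (W : Matrix (Fin n) (Fin n) ℝ) (γ : ℝ), W.PosSemidef →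
      X + t • (W - X) = γ • X → ∃ δ : ℝ, 0 ≤ δ ∧ W = δ • X := by
    intro W γ hWpsd h
    have h1 : t • W = (γ - 1 + t) • X := by
      have h' : t • (W - X) = γ • X - X := by rw [← h]; abel
      rw [smul_sub] at h'
      have h'' := sub_eq_iff_eq_add.mp h'
      rw [h'']
      simp [add_smul, sub_smul, one_smul]
    have hWfin : W = ((γ - 1 + t) / t) • X := by
      have := congrArg (fun M => t⁻¹ • M) h1
      simpa [smul_smul, inv_mul_cancel₀ ht0.ne', div_eq_inv_mul] using this
    refine ⟨(γ - 1 + t) / t, ?_, hWfin⟩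
    have htrW : W.trace = ((γ - 1 + t) / t) * X.trace := by
      rw [hWfin, Matrix.trace_smul, smul_eq_mul]
    have h0 : 0 ≤ W.trace := psd_trace_nonneg hWpsd
    nlinarith
  exact ⟨solve Y α hY.1 hYα, solve Z β hZ.1 hZβ⟩

end Aux

theorem stmt_5 {n : ℕ} (𝓜 𝓜' : Set (Matrix (Fin n) (Fin n) ℝ))
    (h𝓜 : ∀ N ∈ 𝓜, N.IsSymm) (hsub : 𝓜' ⊆ 𝓜)
    (X : Matrix (Fin n) (Fin n) ℝ)
    (hX : IsExtremeRay' (SCone 𝓜) X)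
    (htight : {N | N ∈ 𝓜 ∧ (N * X).trace = 0} ⊆ 𝓜')
    (hcomp : IsCompact (𝓜 \ 𝓜')) :
    IsExtremeRay' (SCone 𝓜') X ∧
      (𝓜' = {N | N ∈ 𝓜 ∧ (N * X).trace = 0} → IsExtremeRay' (TCone 𝓜') X) := by
  obtain ⟨hXS, hX0, hext⟩ := hX
  have hXS' : X ∈ SCone 𝓜' := ⟨hXS.1, fun N hN => hXS.2 N (hsub hN)⟩
  constructor
  · exact ⟨hXS', hX0, fun Y hY Z hZ h =>
      key 𝓜 𝓜' hsub X hXS hX0 hext htight hcomp Y hY Z hZ h⟩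
  · intro heq
    have hXT : X ∈ TCone 𝓜' := ⟨hXS.1, fun N hN => by
      have := heq ▸ hN; exact this.2⟩
    refine ⟨hXT, hX0, fun Y hY Z hZ h => ?_⟩
    exact key 𝓜 𝓜' hsub X hXS hX0 hext htight hcomp
      Y ⟨hY.1, fun N hN => (hY.2 N hN).ge⟩ Z ⟨hZ.1, fun N hN => (hZ.2 N hN).ge⟩ h
end
end

section
/- Let M ⊆ S^n be finite. If T(M') = {X ⪰ 0 : ⟨M,X⟩ = 0 ∀M ∈ M'} is rank-one generated for every subset M' ⊆ M, then S(M) = {X ⪰ 0 : ⟨M,X⟩ ≥ 0 ∀M ∈ M} is rank-one generated. -/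
open Matrix Set

noncomputable section

/-! ### Auxiliary lemmas -/

namespace StmtSixAux

open Pointwise

variable {n : ℕ}

abbrev Mat (n : ℕ) := Matrix (Fin n) (Fin n) ℝ

/-- The mixed cone `U(𝓐, 𝓑)`. -/
def UCone (𝓐 𝓑 : Set (Mat n)) : Set (Mat n) := TCone 𝓐 ∩ SCone 𝓑

lemma psd_smul {A : Mat n} (hA : A.PosSemidef) {c : ℝ} (hc : 0 ≤ c) :
    (c • A).PosSemidef := by
  refine ⟨?_, fun x => ?_⟩
  · show (c • A)ᴴ = c • A
    rw [conjTranspose_smul, star_trivial, hA.1.eq]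
  · exact (hA.smul hc).2 x

lemma trace_mul_add (N X Y : Mat n) :
    (N * (X + Y)).trace = (N * X).trace + (N * Y).trace := by
  rw [mul_add, trace_add]

lemma trace_mul_smul (N : Mat n) (c : ℝ) (X : Mat n) :
    (N * (c • X)).trace = c * (N * X).trace := by
  rw [mul_smul_comm, trace_smul, smul_eq_mul]

lemma UCone_add {𝓐 𝓑 : Set (Mat n)} {X Y : Mat n} (hX : X ∈ UCone 𝓐 𝓑)
    (hY : Y ∈ UCone 𝓐 𝓑) : X + Y ∈ UCone 𝓐 𝓑 := by
  obtain ⟨⟨hX1, hX2⟩, ⟨_, hX3⟩⟩ := hX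
  obtain ⟨⟨hY1, hY2⟩, ⟨_, hY3⟩⟩ := hY
  refine ⟨⟨hX1.add hY1, fun N hN => ?_⟩, ⟨hX1.add hY1, fun N hN => ?_⟩⟩
  · rw [trace_mul_add, hX2 N hN, hY2 N hN, add_zero]
  · rw [trace_mul_add]
    exact add_nonneg (hX3 N hN) (hY3 N hN)

lemma UCone_smul {𝓐 𝓑 : Set (Mat n)} {X : Mat n} (hX : X ∈ UCone 𝓐 𝓑)
    {c : ℝ} (hc : 0 ≤ c) : c • X ∈ UCone 𝓐 𝓑 := by
  obtain ⟨⟨hX1, hX2⟩, ⟨_, hX3⟩⟩ := hX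
  refine ⟨⟨psd_smul hX1 hc, fun N hN => ?_⟩, ⟨psd_smul hX1 hc, fun N hN => ?_⟩⟩
  · rw [trace_mul_smul, hX2 N hN, mul_zero]
  · rw [trace_mul_smul]
    exact mul_nonneg hc (hX3 N hN)

lemma UCone_convex (𝓐 𝓑 : Set (Mat n)) : Convex ℝ (UCone 𝓐 𝓑) :=
  fun _ hX _ hY a b ha hb _ => UCone_add (UCone_smul hX ha) (UCone_smul hY hb)

lemma zero_mem_R1 : (0 : Mat n) ∈ RankOneSet n :=
  ⟨0, by ext i j; simp [vecMulVec_apply]⟩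

lemma R1_smul {A : Mat n} (hA : A ∈ RankOneSet n) {c : ℝ} (hc : 0 ≤ c) :
    c • A ∈ RankOneSet n := by
  obtain ⟨x, rfl⟩ := hA
  refine ⟨Real.sqrt c • x, ?_⟩
  ext i j
  simp only [vecMulVec_apply, Matrix.smul_apply, Pi.smul_apply, smul_eq_mul]
  have h2 : Real.sqrt c * Real.sqrt c = c := Real.mul_self_sqrt hc
  conv_lhs => rw [← h2]
  ring

lemma zero_mem_UCone (𝓐 𝓑 : Set (Mat n)) : (0 : Mat n) ∈ UCone 𝓐 𝓑 :=
  ⟨⟨Matrix.PosSemidef.zero, fun N _ => by simp⟩, ⟨Matrix.PosSemidef.zero, fun N _ => by simp⟩⟩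

/-- Nonnegative scaling stays in the convex hull of a `0`-containing, scaling-closed set. -/
lemma hull_smul_mem {S : Set (Mat n)} (h0 : (0 : Mat n) ∈ S)
    (hS : ∀ c : ℝ, 0 ≤ c → ∀ A ∈ S, c • A ∈ S) {c : ℝ} (hc : 0 ≤ c) {A : Mat n}
    (hA : A ∈ convexHull ℝ S) : c • A ∈ convexHull ℝ S := by
  rcases eq_or_lt_of_le hc with rfl | hc'
  · rw [zero_smul]
    exact subset_convexHull ℝ S h0
  · have h1 : c • A ∈ c • convexHull ℝ S := smul_mem_smul_set hA
    rw [← convexHull_smul] at h1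
    refine convexHull_mono ?_ h1
    rintro B ⟨B', hB', rfl⟩
    exact hS c hc _ hB'

lemma hull_add_mem {S : Set (Mat n)} (h0 : (0 : Mat n) ∈ S)
    (hS : ∀ c : ℝ, 0 ≤ c → ∀ A ∈ S, c • A ∈ S) {A B : Mat n}
    (hA : A ∈ convexHull ℝ S) (hB : B ∈ convexHull ℝ S) :
    A + B ∈ convexHull ℝ S := by
  have hmid : (1/2 : ℝ) • A + (1/2 : ℝ) • B ∈ convexHull ℝ S :=
    (convex_convexHull ℝ S) hA hB (by norm_num) (by norm_num) (by norm_num)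
  have h2 : (2 : ℝ) • ((1/2 : ℝ) • A + (1/2 : ℝ) • B) = A + B := by
    rw [smul_add, smul_smul, smul_smul]; norm_num
  rw [← h2]
  exact hull_smul_mem h0 hS (by norm_num) hmid

/-- Scaling-closure of the generating sets we use. -/
lemma gen_smul (𝓐 𝓑 : Set (Mat n)) (P : Set (Mat n))
    (hP : ∀ c : ℝ, 0 ≤ c → ∀ A ∈ P, c • A ∈ P) :
    ∀ c : ℝ, 0 ≤ c → ∀ A ∈ (UCone 𝓐 𝓑 ∩ RankOneSet n) ∩ P,
      c • A ∈ (UCone 𝓐 𝓑 ∩ RankOneSet n) ∩ P := by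
  rintro c hc A ⟨⟨hU, hR⟩, hPA⟩
  exact ⟨⟨UCone_smul hU hc, R1_smul hR hc⟩, hP c hc A hPA⟩

lemma UCone_empty (𝓐 : Set (Mat n)) : UCone 𝓐 (∅ : Set (Mat n)) = TCone 𝓐 := by
  ext X
  constructor
  · rintro ⟨hT, _⟩; exact hT
  · rintro ⟨h1, h2⟩; exact ⟨⟨h1, h2⟩, ⟨h1, fun N hN => absurd hN (Set.notMem_empty N)⟩⟩

lemma UCone_subset_insert (𝓐 𝓑 : Set (Mat n)) (P : Mat n) :
    UCone (insert P 𝓐) 𝓑 ⊆ UCone 𝓐 (insert P 𝓑) := by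
  rintro X ⟨⟨hpsd, hT⟩, ⟨_, hSS⟩⟩
  refine ⟨⟨hpsd, fun N hN => hT N (Set.mem_insert_of_mem _ hN)⟩, ⟨hpsd, fun N hN => ?_⟩⟩
  rcases hN with rfl | hN
  · exact le_of_eq (hT N (Set.mem_insert _ _)).symm
  · exact hSS N hN

/-- The key induction. -/
lemma key (𝓜 : Set (Mat n)) (h : ∀ 𝓐 ⊆ 𝓜, IsROG (TCone 𝓐)) :
    ∀ (𝓑 : Set (Mat n)), 𝓑.Finite → 𝓑 ⊆ 𝓜 → ∀ 𝓐 ⊆ 𝓜, IsROG (UCone 𝓐 𝓑) := by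
  intro 𝓑 hfin
  refine Set.Finite.induction_on
    (motive := fun 𝓑 _ => 𝓑 ⊆ 𝓜 → ∀ 𝓐 ⊆ 𝓜, IsROG (UCone 𝓐 𝓑)) 𝓑 hfin ?_ ?_
  · intro _ 𝓐 h𝓐
    rw [UCone_empty]
    exact h 𝓐 h𝓐
  · intro P 𝓑 hP hBfin IH hsub 𝓐 h𝓐
    have hP𝓜 : P ∈ 𝓜 := hsub (Set.mem_insert _ _)
    have h𝓑𝓜 : 𝓑 ⊆ 𝓜 := fun N hN => hsub (Set.mem_insert_of_mem _ hN)
    have IH𝓐 : IsROG (UCone 𝓐 𝓑) := IH h𝓑𝓜 𝓐 h𝓐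
    have IHP : IsROG (UCone (insert P 𝓐) 𝓑) :=
      IH h𝓑𝓜 (insert P 𝓐) (Set.insert_subset hP𝓜 h𝓐)
    -- target generating set
    set G : Set (Mat n) := UCone 𝓐 (insert P 𝓑) ∩ RankOneSet n with hG
    have hG0 : (0 : Mat n) ∈ G := ⟨zero_mem_UCone _ _, zero_mem_R1⟩
    have hGs : ∀ c : ℝ, 0 ≤ c → ∀ A ∈ G, c • A ∈ G := by
      rintro c hc A ⟨hU, hR⟩
      exact ⟨UCone_smul hU hc, R1_smul hR hc⟩
    -- sub-cone images inside the target hull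
    have hTsub : convexHull ℝ (UCone (insert P 𝓐) 𝓑 ∩ RankOneSet n) ⊆ convexHull ℝ G := by
      refine convexHull_mono ?_
      rintro A ⟨hU, hR⟩
      exact ⟨UCone_subset_insert 𝓐 𝓑 P hU, hR⟩
    refine Set.Subset.antisymm ?_ (convexHull_min Set.inter_subset_left (UCone_convex _ _))
    intro X hX
    obtain ⟨⟨hXpsd, hXT⟩, ⟨_, hXS⟩⟩ := hX
    have hXP : 0 ≤ (P * X).trace := hXS P (Set.mem_insert _ _)
    have hXU : X ∈ UCone 𝓐 𝓑 :=
      ⟨⟨hXpsd, hXT⟩, ⟨hXpsd, fun N hN => hXS N (Set.mem_insert_of_mem _ hN)⟩⟩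
    -- split the generators by the sign of ⟨P, ·⟩
    set Sp : Set (Mat n) := (UCone 𝓐 𝓑 ∩ RankOneSet n) ∩ {A | 0 ≤ (P * A).trace} with hSp
    set Sm : Set (Mat n) := (UCone 𝓐 𝓑 ∩ RankOneSet n) ∩ {A | (P * A).trace ≤ 0} with hSm
    have hSp0 : (0 : Mat n) ∈ Sp := ⟨⟨zero_mem_UCone _ _, zero_mem_R1⟩, by simp⟩
    have hSm0 : (0 : Mat n) ∈ Sm := ⟨⟨zero_mem_UCone _ _, zero_mem_R1⟩, by simp⟩
    have hSps : ∀ c : ℝ, 0 ≤ c → ∀ A ∈ Sp, c • A ∈ Sp := by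
      refine gen_smul _ _ _ ?_
      intro c hc A hA
      simp only [Set.mem_setOf_eq] at hA ⊢
      rw [trace_mul_smul]
      exact mul_nonneg hc hA
    have hSms : ∀ c : ℝ, 0 ≤ c → ∀ A ∈ Sm, c • A ∈ Sm := by
      refine gen_smul _ _ _ ?_
      intro c hc A hA
      simp only [Set.mem_setOf_eq] at hA ⊢
      rw [trace_mul_smul]
      exact mul_nonpos_iff.mpr (Or.inl ⟨hc, hA⟩)
    have hunion : UCone 𝓐 𝓑 ∩ RankOneSet n = Sp ∪ Sm := by
      ext A
      constructor
      · intro hA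
        rcases le_or_gt 0 ((P * A).trace) with h' | h'
        · exact Or.inl ⟨hA, h'⟩
        · exact Or.inr ⟨hA, le_of_lt h'⟩
      · rintro (⟨hA, _⟩ | ⟨hA, _⟩) <;> exact hA
    -- decompose X
    have hXhull : X ∈ convexHull ℝ (Sp ∪ Sm) := by
      rw [← hunion, ← IH𝓐]; exact hXU
    rw [convexHull_union ⟨0, hSp0⟩ ⟨0, hSm0⟩, mem_convexJoin] at hXhull
    obtain ⟨Y', hY', Z', hZ', u, v, hu, hv, huv, hX'⟩ := hXhull
    set Y : Mat n := u • Y' with hYdef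
    set Z : Mat n := v • Z' with hZdef
    clear_value Y Z
    have hY : Y ∈ convexHull ℝ Sp := by rw [hYdef]; exact hull_smul_mem hSp0 hSps hu hY'
    have hZ : Z ∈ convexHull ℝ Sm := by rw [hZdef]; exact hull_smul_mem hSm0 hSms hv hZ'
    have hXYZ : X = Y + Z := hX'.symm
    have hYU : Y ∈ UCone 𝓐 𝓑 :=
      convexHull_min (fun A hA => hA.1.1) (UCone_convex 𝓐 𝓑) hY
    have hZU : Z ∈ UCone 𝓐 𝓑 :=
      convexHull_min (fun A hA => hA.1.1) (UCone_convex 𝓐 𝓑) hZ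
    have hYP : 0 ≤ (P * Y).trace := by
      have : convexHull ℝ Sp ⊆ {A : Mat n | 0 ≤ (P * A).trace} := by
        refine convexHull_min (fun A hA => hA.2) ?_
        intro A hA B hB a b ha hb hab
        simp only [Set.mem_setOf_eq] at *
        rw [trace_mul_add, trace_mul_smul, trace_mul_smul]
        exact add_nonneg (mul_nonneg ha hA) (mul_nonneg hb hB)
      exact this hY
    have hZP : (P * Z).trace ≤ 0 := by
      have : convexHull ℝ Sm ⊆ {A : Mat n | (P * A).trace ≤ 0} := by
        refine convexHull_min (fun A hA => hA.2) ?_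
        intro A hA B hB a b ha hb hab
        simp only [Set.mem_setOf_eq] at *
        rw [trace_mul_add, trace_mul_smul, trace_mul_smul]
        exact add_nonpos (mul_nonpos_iff.mpr (Or.inl ⟨ha, hA⟩))
          (mul_nonpos_iff.mpr (Or.inl ⟨hb, hB⟩))
      exact this hZ
    have hSpG : convexHull ℝ Sp ⊆ convexHull ℝ G := by
      refine convexHull_mono ?_
      rintro A ⟨⟨⟨⟨hpsd, hT⟩, ⟨_, hSS⟩⟩, hR⟩, hPA⟩
      refine ⟨⟨⟨hpsd, hT⟩, ⟨hpsd, fun N hN => ?_⟩⟩, hR⟩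
      rcases hN with rfl | hN
      · exact hPA
      · exact hSS N hN
    have htrX : (P * X).trace = (P * Y).trace + (P * Z).trace := by
      rw [hXYZ, trace_mul_add]
    -- main case split
    rcases eq_or_lt_of_le hYP with hY0 | hY0
    · -- ⟨P, Y⟩ = 0, hence ⟨P, Z⟩ = 0 too
      have hZ0 : (P * Z).trace = 0 := by
        have : 0 ≤ (P * Z).trace := by rw [htrX, ← hY0, zero_add] at hXP; exact hXP
        linarith
      have hYT : Y ∈ UCone (insert P 𝓐) 𝓑 := by
        obtain ⟨⟨hpsd, hT⟩, hS'⟩ := hYU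
        refine ⟨⟨hpsd, fun N hN => ?_⟩, hS'⟩
        rcases hN with rfl | hN
        · exact hY0.symm
        · exact hT N hN
      have hZT : Z ∈ UCone (insert P 𝓐) 𝓑 := by
        obtain ⟨⟨hpsd, hT⟩, hS'⟩ := hZU
        refine ⟨⟨hpsd, fun N hN => ?_⟩, hS'⟩
        rcases hN with rfl | hN
        · exact hZ0
        · exact hT N hN
      have hYh : Y ∈ convexHull ℝ G := hTsub (IHP ▸ hYT)
      have hZh : Z ∈ convexHull ℝ G := hTsub (IHP ▸ hZT)
      rw [hXYZ]
      exact hull_add_mem hG0 hGs hYh hZh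
    · -- ⟨P, Y⟩ > 0
      set s : ℝ := -(P * Z).trace / (P * Y).trace with hs
      have hs0 : 0 ≤ s := div_nonneg (by linarith) (le_of_lt hY0)
      have hs1 : s ≤ 1 := by
        rw [hs, div_le_one hY0]
        linarith
      set W : Mat n := Z + s • Y with hW
      clear_value s W
      have hWU : W ∈ UCone 𝓐 𝓑 := by rw [hW]; exact UCone_add hZU (UCone_smul hYU hs0)
      have hWP : (P * W).trace = 0 := by
        rw [hW, trace_mul_add, trace_mul_smul, hs, div_mul_cancel₀ _ (ne_of_gt hY0)]
        ring
      have hWT : W ∈ UCone (insert P 𝓐) 𝓑 := by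
        obtain ⟨⟨hpsd, hT⟩, hS'⟩ := hWU
        refine ⟨⟨hpsd, fun N hN => ?_⟩, hS'⟩
        rcases hN with rfl | hN
        · exact hWP
        · exact hT N hN
      have hWh : W ∈ convexHull ℝ G := hTsub (IHP ▸ hWT)
      have hYh : (1 - s) • Y ∈ convexHull ℝ G :=
        hSpG (hull_smul_mem hSp0 hSps (by linarith) hY)
      have hXW : X = W + (1 - s) • Y := by
        rw [hW, hXYZ, sub_smul, one_smul]
        abel
      rw [hXW]
      exact hull_add_mem hG0 hGs hWh hYh

end StmtSixAux

open StmtSixAux in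
theorem stmt_6 {n : ℕ} (𝓜 : Set (Matrix (Fin n) (Fin n) ℝ)) (hfin : 𝓜.Finite)
    (h𝓜 : ∀ N ∈ 𝓜, N.IsSymm)
    (h : ∀ 𝓜' ⊆ 𝓜, IsROG (TCone 𝓜')) :
    IsROG (SCone 𝓜) := by
  have hU : UCone (∅ : Set (Mat n)) 𝓜 = SCone 𝓜 := by
    ext X
    constructor
    · rintro ⟨_, hS⟩; exact hS
    · rintro ⟨h1, h2⟩
      exact ⟨⟨h1, fun N hN => absurd hN (Set.notMem_empty N)⟩, ⟨h1, h2⟩⟩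
  have := key 𝓜 h 𝓜 hfin (le_refl 𝓜) ∅ (Set.empty_subset 𝓜)
  rwa [hU] at this

end
end

section
/- The cone T(M) = {X ⪰ 0 : ⟨M,X⟩ = 0 ∀M ∈ M} is rank-one generated if and only if for every nonzero X ∈ T(M), the range of X contains a nonzero vector x with xᵀMx = 0 for all M ∈ M. -/
open Matrix Set Pointwise

noncomputable section

namespace StmtAux

variable {n : ℕ}

lemma dot_mulVec_symm {X : Matrix (Fin n) (Fin n) ℝ} (hX : X.IsHermitian) (a b : Fin n → ℝ) :
    a ⬝ᵥ X *ᵥ b = b ⬝ᵥ X *ᵥ a := by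
  have hXt : Xᵀ = X := by
    rw [← conjTranspose_eq_transpose_of_trivial]; exact hX
  rw [dotProduct_mulVec, ← mulVec_transpose, hXt, dotProduct_comm]

lemma vecMulVec_mulVec (x v : Fin n → ℝ) : vecMulVec x x *ᵥ v = (x ⬝ᵥ v) • x := by
  ext i
  simp [mulVec, vecMulVec_apply, dotProduct, Finset.mul_sum, mul_assoc, mul_comm, mul_left_comm]

lemma posSemidef_vecMulVec (x : Fin n → ℝ) : (vecMulVec x x).PosSemidef := by
  refine Matrix.PosSemidef.of_dotProduct_mulVec_nonneg ?_ ?_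
  · rw [Matrix.IsHermitian, conjTranspose_eq_transpose_of_trivial]
    ext i j
    simp [vecMulVec_apply, mul_comm]
  · intro v
    rw [show star v = v from rfl, vecMulVec_mulVec, dotProduct_smul, smul_eq_mul,
      dotProduct_comm]
    exact mul_self_nonneg _

lemma trace_mul_vecMulVec (N : Matrix (Fin n) (Fin n) ℝ) (x : Fin n → ℝ) :
    (N * vecMulVec x x).trace = x ⬝ᵥ N *ᵥ x := by
  rw [Matrix.trace, dotProduct]
  simp only [diag_apply, mul_apply, vecMulVec_apply, mulVec, dotProduct, Finset.mul_sum]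
  exact Finset.sum_congr rfl fun i _ => Finset.sum_congr rfl fun j _ => by ring

lemma vecMulVec_zero_eq : vecMulVec (0 : Fin n → ℝ) (0 : Fin n → ℝ) = (0 : Matrix (Fin n) (Fin n) ℝ) := by
  ext i j; simp [vecMulVec_apply]

lemma mem_range_of_perp_ker {X : Matrix (Fin n) (Fin n) ℝ} (hX : X.IsHermitian)
    {x : Fin n → ℝ} (hx : ∀ v : Fin n → ℝ, X *ᵥ v = 0 → x ⬝ᵥ v = 0) :
    ∃ y : Fin n → ℝ, X *ᵥ y = x := by
  classical
  set T := toEuclideanLin X with hT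
  have hsym : T.IsSymmetric := isHermitian_iff_isSymmetric.mp hX
  have hker : ∀ v : EuclideanSpace ℝ (Fin n),
      v ∈ LinearMap.ker T → X *ᵥ (WithLp.equiv 2 (Fin n → ℝ) v) = 0 := by
    intro v hv
    have h0 : T v = 0 := hv
    have := congrArg (WithLp.equiv 2 (Fin n → ℝ)) h0
    simpa [hT, toEuclideanLin_apply] using this
  have hle : LinearMap.range T ≤ (LinearMap.ker T)ᗮ := by
    rintro _ ⟨u, rfl⟩
    rw [Submodule.mem_orthogonal]
    intro v hv
    rw [real_inner_comm, hsym u v]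
    have h0 : T v = 0 := hv
    rw [h0, inner_zero_right]
  have h1 := LinearMap.finrank_range_add_finrank_ker T
  have h2 := Submodule.finrank_add_finrank_orthogonal (K := LinearMap.ker T)
  have heq : LinearMap.range T = (LinearMap.ker T)ᗮ :=
    Submodule.eq_of_le_of_finrank_eq hle (by omega)
  have hxmem : (WithLp.equiv 2 (Fin n → ℝ)).symm x ∈ (LinearMap.ker T)ᗮ := by
    rw [Submodule.mem_orthogonal]
    intro v hv
    have h0 := hx _ (hker v hv)
    rw [PiLp.inner_apply, ← h0, dotProduct]
    exact Finset.sum_congr rfl fun i _ => by simp [mul_comm]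
  rw [← heq] at hxmem
  obtain ⟨y, hy⟩ := hxmem
  refine ⟨WithLp.equiv 2 (Fin n → ℝ) y, ?_⟩
  have := congrArg (WithLp.equiv 2 (Fin n → ℝ)) hy
  simpa [hT, toEuclideanLin_apply] using this

lemma psd_cs {X : Matrix (Fin n) (Fin n) ℝ} (hX : X.PosSemidef) (y v : Fin n → ℝ) :
    (y ⬝ᵥ X *ᵥ v) ^ 2 ≤ (y ⬝ᵥ X *ᵥ y) * (v ⬝ᵥ X *ᵥ v) := by
  have key : ∀ s : ℝ,
      0 ≤ (y ⬝ᵥ X *ᵥ y) * (s * s) + (2 * (y ⬝ᵥ X *ᵥ v)) * s + (v ⬝ᵥ X *ᵥ v) := by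
    intro s
    have h := hX.dotProduct_mulVec_nonneg (v + s • y)
    rw [show star (v + s • y) = v + s • y from rfl] at h
    have hexp : (v + s • y) ⬝ᵥ X *ᵥ (v + s • y)
        = (y ⬝ᵥ X *ᵥ y) * (s * s) + (2 * (y ⬝ᵥ X *ᵥ v)) * s + (v ⬝ᵥ X *ᵥ v) := by
      rw [mulVec_add, mulVec_smul, add_dotProduct, smul_dotProduct,
        dotProduct_add, dotProduct_add, dotProduct_smul, dotProduct_smul,
        dot_mulVec_symm hX.1 v y]
      simp only [smul_eq_mul, smul_add]
      ring
    rw [hexp] at h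
    exact h
  have hd := discrim_le_zero key
  rw [discrim] at hd
  nlinarith [hd]

/-- The quadratic-form-in-the-matrix linear functional. -/
def qf (v : Fin n → ℝ) : Matrix (Fin n) (Fin n) ℝ →ₗ[ℝ] ℝ where
  toFun M := v ⬝ᵥ M *ᵥ v
  map_add' A B := by simp [add_mulVec, dotProduct_add]
  map_smul' c A := by simp [smul_mulVec, dotProduct_smul]

variable {𝓜 : Set (Matrix (Fin n) (Fin n) ℝ)}

lemma herm_smul {c : ℝ} {A : Matrix (Fin n) (Fin n) ℝ} (hA : A.IsHermitian) :
    (c • A).IsHermitian := by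
  rw [Matrix.IsHermitian, conjTranspose_eq_transpose_of_trivial] at hA ⊢
  rw [transpose_smul, hA]

lemma smul_mem_TCone {X : Matrix (Fin n) (Fin n) ℝ} (hX : X ∈ TCone 𝓜) {c : ℝ} (hc : 0 ≤ c) :
    c • X ∈ TCone 𝓜 := by
  refine ⟨.of_dotProduct_mulVec_nonneg (herm_smul hX.1.1) fun v => ?_, fun N hN => ?_⟩
  · rw [show star v = v from rfl, smul_mulVec, dotProduct_smul, smul_eq_mul]
    exact mul_nonneg hc (by simpa using hX.1.dotProduct_mulVec_nonneg v)
  · rw [Matrix.mul_smul, trace_smul, hX.2 N hN, smul_zero]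

lemma zero_mem_inter : (0 : Matrix (Fin n) (Fin n) ℝ) ∈ TCone 𝓜 ∩ RankOneSet n :=
  ⟨⟨Matrix.PosSemidef.zero, fun N _ => by simp⟩, ⟨0, vecMulVec_zero_eq (n := n) |>.symm⟩⟩

lemma smul_vecMulVec {c : ℝ} (hc : 0 ≤ c) (x : Fin n → ℝ) :
    c • vecMulVec x x = vecMulVec (Real.sqrt c • x) (Real.sqrt c • x) := by
  have h := Real.mul_self_sqrt hc
  ext i j
  simp only [Matrix.smul_apply, vecMulVec_apply, Pi.smul_apply, smul_eq_mul]
  linear_combination (x i * x j) * h.symm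

lemma smul_mem_inter {c : ℝ} (hc : 0 ≤ c) {M : Matrix (Fin n) (Fin n) ℝ}
    (hM : M ∈ TCone 𝓜 ∩ RankOneSet n) : c • M ∈ TCone 𝓜 ∩ RankOneSet n := by
  refine ⟨smul_mem_TCone hM.1 hc, ?_⟩
  obtain ⟨x, rfl⟩ := hM.2
  exact ⟨Real.sqrt c • x, smul_vecMulVec hc x⟩

lemma smul_set_inter {c : ℝ} (hc : 0 < c) :
    c • (TCone 𝓜 ∩ RankOneSet n) = TCone 𝓜 ∩ RankOneSet n := by
  apply Set.Subset.antisymm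
  · rintro _ ⟨M, hM, rfl⟩
    exact smul_mem_inter hc.le hM
  · intro M hM
    exact ⟨c⁻¹ • M, smul_mem_inter (inv_nonneg.mpr hc.le) hM, by
      show c • c⁻¹ • M = M
      rw [smul_smul, mul_inv_cancel₀ hc.ne', one_smul]⟩

lemma hull_smul_mem {c : ℝ} (hc : 0 ≤ c) {M : Matrix (Fin n) (Fin n) ℝ}
    (hM : M ∈ convexHull ℝ (TCone 𝓜 ∩ RankOneSet n)) :
    c • M ∈ convexHull ℝ (TCone 𝓜 ∩ RankOneSet n) := by
  rcases eq_or_lt_of_le hc with h | h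
  · rw [← h, zero_smul]
    exact subset_convexHull ℝ _ zero_mem_inter
  · have h2 : c • M ∈ c • convexHull ℝ (TCone 𝓜 ∩ RankOneSet n) :=
      Set.smul_mem_smul_set hM
    rwa [← convexHull_smul, smul_set_inter h] at h2

lemma hull_add_mem {A B : Matrix (Fin n) (Fin n) ℝ}
    (hA : A ∈ convexHull ℝ (TCone 𝓜 ∩ RankOneSet n))
    (hB : B ∈ convexHull ℝ (TCone 𝓜 ∩ RankOneSet n)) :
    A + B ∈ convexHull ℝ (TCone 𝓜 ∩ RankOneSet n) := by
  have hmid : (1/2 : ℝ) • A + (1/2 : ℝ) • B ∈ convexHull ℝ (TCone 𝓜 ∩ RankOneSet n) :=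
    (convex_convexHull ℝ _) hA hB (by norm_num) (by norm_num) (by norm_num)
  have h2 := hull_smul_mem (c := 2) (by norm_num) hmid
  rwa [smul_add, smul_smul, smul_smul, show (2 : ℝ) * (1/2) = 1 by norm_num,
    one_smul, one_smul] at h2

end StmtAux
namespace StmtAux

variable {n : ℕ} {𝓜 : Set (Matrix (Fin n) (Fin n) ℝ)}

lemma eq_zero_of_range_bot {X : Matrix (Fin n) (Fin n) ℝ}
    (h : Module.finrank ℝ (LinearMap.range X.mulVecLin) = 0) : X = 0 := by
  have hbot : LinearMap.range X.mulVecLin = ⊥ := Submodule.finrank_eq_zero.mp h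
  ext i j
  have hv : X.mulVecLin (Pi.single j 1) = 0 := by
    have : X.mulVecLin (Pi.single j 1) ∈ LinearMap.range X.mulVecLin :=
      LinearMap.mem_range_self _ _
    rw [hbot] at this
    simpa using this
  have := congrFun hv i
  simpa [Matrix.mulVecLin_apply, Matrix.mulVec_single] using this

lemma backward_aux
    (hcond : ∀ X ∈ TCone 𝓜, X ≠ 0 →
      ∃ x : Fin n → ℝ, x ≠ 0 ∧ (∃ y : Fin n → ℝ, X.mulVec y = x) ∧
        ∀ N ∈ 𝓜, x ⬝ᵥ N.mulVec x = 0) :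
    ∀ r : ℕ, ∀ X ∈ TCone 𝓜, Module.finrank ℝ (LinearMap.range X.mulVecLin) ≤ r →
      X ∈ convexHull ℝ (TCone 𝓜 ∩ RankOneSet n) := by
  intro r
  induction r with
  | zero =>
    intro X _ hr
    have : X = 0 := eq_zero_of_range_bot (Nat.le_zero.mp hr)
    rw [this]
    exact subset_convexHull ℝ _ zero_mem_inter
  | succ r ih =>
    intro X hX hr
    by_cases hX0 : X = 0
    · rw [hX0]; exact subset_convexHull ℝ _ zero_mem_inter
    obtain ⟨x, hx0, ⟨y, hy⟩, hxN⟩ := hcond X hX hX0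
    set c : ℝ := y ⬝ᵥ X *ᵥ y with hc
    have hcnn : 0 ≤ c := by simpa using hX.1.dotProduct_mulVec_nonneg y
    have hc0 : 0 < c := by
      rcases hcnn.lt_or_eq with h | h
      · exact h
      · exfalso
        apply hx0
        rw [← hy]
        have := (hX.1.dotProduct_mulVec_zero_iff y).mp (by simpa using h.symm)
        exact this
    have hxv : ∀ v : Fin n → ℝ, x ⬝ᵥ v = y ⬝ᵥ X *ᵥ v := by
      intro v
      rw [← hy, dotProduct_comm, dot_mulVec_symm hX.1.1 v y]
    set Z : Matrix (Fin n) (Fin n) ℝ := X - c⁻¹ • vecMulVec x x with hZ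
    have hZquad : ∀ v : Fin n → ℝ, v ⬝ᵥ Z *ᵥ v
        = v ⬝ᵥ X *ᵥ v - c⁻¹ * ((y ⬝ᵥ X *ᵥ v) * (y ⬝ᵥ X *ᵥ v)) := by
      intro v
      rw [hZ, sub_mulVec, dotProduct_sub, smul_mulVec, vecMulVec_mulVec,
        dotProduct_smul, dotProduct_smul, smul_eq_mul, smul_eq_mul,
        hxv v, dotProduct_comm v x, hxv v]
    have hZpsd : Z.PosSemidef := by
      refine Matrix.PosSemidef.of_dotProduct_mulVec_nonneg ?_ ?_
      · exact (hX.1.1.sub (herm_smul (posSemidef_vecMulVec x).1))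
      · intro v
        rw [show star v = v from rfl, hZquad v, sub_nonneg]
        have hcs := psd_cs hX.1 y v
        rw [← hc] at hcs
        rw [← mul_le_mul_iff_right₀ hc0, ← mul_assoc, mul_inv_cancel₀ hc0.ne', one_mul]
        nlinarith [hcs]
    have hZT : Z ∈ TCone 𝓜 := by
      refine ⟨hZpsd, fun N hN => ?_⟩
      rw [hZ, mul_sub, trace_sub, Matrix.mul_smul, trace_smul, hX.2 N hN,
        trace_mul_vecMulVec, hxN N hN, smul_zero, sub_zero]
    -- the kernel grows strictly
    have hker_le : LinearMap.ker X.mulVecLin < LinearMap.ker Z.mulVecLin := by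
      constructor
      · intro v hv
        have hXv : X *ᵥ v = 0 := hv
        have hxv0 : x ⬝ᵥ v = 0 := by rw [hxv v, hXv, dotProduct_zero]
        show Z *ᵥ v = 0
        rw [hZ, sub_mulVec, hXv, smul_mulVec, vecMulVec_mulVec, hxv0,
          zero_smul, smul_zero, sub_zero]
      · intro hle
        have hyZ : Z *ᵥ y = 0 := by
          rw [hZ, sub_mulVec, smul_mulVec, vecMulVec_mulVec, hy]
          have hxy : x ⬝ᵥ y = c := by
            rw [hc, ← hy, dotProduct_comm]
          rw [hxy, smul_smul, inv_mul_cancel₀ hc0.ne', one_smul, sub_self]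
        have : X *ᵥ y = 0 := hle hyZ
        rw [this] at hy
        exact hx0 hy.symm
    have hrankZ : Module.finrank ℝ (LinearMap.range Z.mulVecLin) ≤ r := by
      have h1 := LinearMap.finrank_range_add_finrank_ker X.mulVecLin
      have h2 := LinearMap.finrank_range_add_finrank_ker Z.mulVecLin
      have h3 := Submodule.finrank_lt_finrank_of_lt hker_le
      omega
    have hZhull := ih Z hZT hrankZ
    have hterm : c⁻¹ • vecMulVec x x ∈ TCone 𝓜 ∩ RankOneSet n := by
      refine smul_mem_inter (inv_nonneg.mpr hc0.le) ⟨⟨posSemidef_vecMulVec x, ?_⟩, ⟨x, rfl⟩⟩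
      intro N hN
      rw [trace_mul_vecMulVec, hxN N hN]
    have : X = c⁻¹ • vecMulVec x x + Z := by rw [hZ]; abel
    rw [this]
    exact hull_add_mem (subset_convexHull ℝ _ hterm) hZhull

end StmtAux
namespace StmtAux

variable {n : ℕ} {𝓜 : Set (Matrix (Fin n) (Fin n) ℝ)}

lemma TCone_convex : Convex ℝ (TCone 𝓜) := by
  intro A hA B hB a b ha hb _
  refine ⟨.of_dotProduct_mulVec_nonneg ((herm_smul hA.1.1).add (herm_smul hB.1.1)) fun v => ?_, fun N hN => ?_⟩
  · rw [show star v = v from rfl, add_mulVec, dotProduct_add, smul_mulVec,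
      smul_mulVec, dotProduct_smul, dotProduct_smul, smul_eq_mul, smul_eq_mul]
    have h1 : 0 ≤ v ⬝ᵥ A *ᵥ v := by simpa using hA.1.dotProduct_mulVec_nonneg v
    have h2 : 0 ≤ v ⬝ᵥ B *ᵥ v := by simpa using hB.1.dotProduct_mulVec_nonneg v
    exact add_nonneg (mul_nonneg ha h1) (mul_nonneg hb h2)
  · rw [mul_add, trace_add, Matrix.mul_smul, Matrix.mul_smul, trace_smul, trace_smul,
      hA.2 N hN, hB.2 N hN, smul_zero, smul_zero, add_zero]

lemma forward_aux (hROG : IsROG (TCone 𝓜)) :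
    ∀ X ∈ TCone 𝓜, X ≠ 0 →
      ∃ x : Fin n → ℝ, x ≠ 0 ∧ (∃ y : Fin n → ℝ, X.mulVec y = x) ∧
        ∀ N ∈ 𝓜, x ⬝ᵥ N.mulVec x = 0 := by
  intro X hX hX0
  have hXh : X ∈ convexHull ℝ (TCone 𝓜 ∩ RankOneSet n) := by
    rw [IsROG] at hROG
    rw [← hROG]
    exact hX
  rw [convexHull_eq] at hXh
  obtain ⟨ι, t, w, z, hw0, hw1, hz, hsum⟩ := hXh
  rw [Finset.centerMass_eq_of_sum_1 _ _ hw1] at hsum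
  have hex : ∃ i ∈ t, w i • z i ≠ 0 := by
    by_contra h
    push_neg at h
    exact hX0 (by rw [← hsum]; exact Finset.sum_eq_zero h)
  obtain ⟨i, hit, hne⟩ := hex
  obtain ⟨x, hxz⟩ := (hz i hit).2
  have hwi : 0 < w i := (hw0 i hit).lt_of_ne (fun h => hne (by rw [← h, zero_smul]))
  have hx0 : x ≠ 0 := by
    rintro rfl
    exact hne (by rw [hxz, vecMulVec_zero_eq, smul_zero])
  refine ⟨x, hx0, ?_, ?_⟩
  · apply mem_range_of_perp_ker hX.1.1
    intro v hv
    have h0 : ∑ j ∈ t, w j * (v ⬝ᵥ z j *ᵥ v) = 0 := by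
      have h1 : (qf v) X = 0 := by
        show v ⬝ᵥ X *ᵥ v = 0
        rw [hv, dotProduct_zero]
      rw [← hsum, map_sum] at h1
      rw [← h1]
      refine Finset.sum_congr rfl fun j _ => ?_
      rw [_root_.map_smul]
      rfl
    have hterm := (Finset.sum_eq_zero_iff_of_nonneg
      (fun j hj => mul_nonneg (hw0 j hj) (by simpa using (hz j hj).1.1.dotProduct_mulVec_nonneg v))).mp h0 i hit
    have h2 : v ⬝ᵥ z i *ᵥ v = 0 := by
      rcases mul_eq_zero.mp hterm with h | h
      · exact absurd h hwi.ne'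
      · exact h
    rw [hxz, vecMulVec_mulVec, dotProduct_smul, smul_eq_mul, dotProduct_comm v x] at h2
    exact mul_self_eq_zero.mp h2
  · intro N hN
    have h3 := (hz i hit).1.2 N hN
    rwa [hxz, trace_mul_vecMulVec] at h3

end StmtAux

open StmtAux in
theorem stmt_8 {n : ℕ} (𝓜 : Set (Matrix (Fin n) (Fin n) ℝ)) (h𝓜 : ∀ N ∈ 𝓜, N.IsSymm) :
    IsROG (TCone 𝓜) ↔
      ∀ X ∈ TCone 𝓜, X ≠ 0 →
        ∃ x : Fin n → ℝ, x ≠ 0 ∧ (∃ y : Fin n → ℝ, X.mulVec y = x) ∧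
          ∀ N ∈ 𝓜, x ⬝ᵥ N.mulVec x = 0 := by
  constructor
  · exact forward_aux
  · intro hcond
    apply Set.Subset.antisymm
    · intro X hX
      exact backward_aux hcond _ X hX le_rfl
    · exact convexHull_min Set.inter_subset_left TCone_convex
end
end

section
/- For any single symmetric matrix M ∈ S^n, the cone S({M}) = {X ⪰ 0 : ⟨M,X⟩ ≥ 0} is rank-one generated. -/
open Matrix Set

noncomputable section

namespace SturmAux

variable {n : ℕ}

/-- The quadratic value `⟨M, v vᵀ⟩ = vᵀ M v`. -/
def qval (M : Matrix (Fin n) (Fin n) ℝ) (v : Fin n → ℝ) : ℝ := (M * vecMulVec v v).trace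

/-- The rank-one matrix `v vᵀ`. -/
def rk (v : Fin n → ℝ) : Matrix (Fin n) (Fin n) ℝ := vecMulVec v v

lemma rk_zero : rk (0 : Fin n → ℝ) = 0 := by
  ext a b; simp [rk, vecMulVec_apply]

lemma rk_smul (c : ℝ) (v : Fin n → ℝ) : rk (c • v) = (c * c) • rk v := by
  ext a b
  simp only [rk, vecMulVec_apply, Pi.smul_apply, smul_eq_mul, Matrix.smul_apply]
  ring

lemma vecMulVec_posSemidef (v : Fin n → ℝ) : (vecMulVec v v).PosSemidef := by
  rw [posSemidef_iff_dotProduct_mulVec]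
  constructor
  · ext i j; simp [vecMulVec_apply, mul_comm]
  · intro x
    have h : star x ⬝ᵥ (vecMulVec v v) *ᵥ x = (v ⬝ᵥ x) * (v ⬝ᵥ x) := by
      simp only [star_trivial, dotProduct, mulVec, vecMulVec_apply, Finset.mul_sum,
        Finset.sum_mul]
      rw [Finset.sum_comm]
      congr 1; ext i; congr 1; ext j; ring
    rw [h]
    exact mul_self_nonneg _

/-- rotation identity for rank-one matrices -/
lemma rot_rk (c s : ℝ) (h : c^2 + s^2 = 1) (i j : Fin n → ℝ) :
    rk (c • j + s • i) + rk ((-s) • j + c • i) = rk j + rk i := by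
  ext a b
  simp only [rk, Matrix.add_apply, vecMulVec_apply, Pi.add_apply, Pi.smul_apply, smul_eq_mul]
  linear_combination (j a * j b + i a * i b) * h

lemma qval_add_of_rk (M : Matrix (Fin n) (Fin n) ℝ) {u w x y : Fin n → ℝ}
    (h : rk u + rk w = rk x + rk y) : qval M u + qval M w = qval M x + qval M y := by
  simp only [qval]
  rw [← trace_add, ← trace_add, ← mul_add, ← mul_add]
  exact congrArg _ (congrArg _ h)

lemma qval_continuous (M : Matrix (Fin n) (Fin n) ℝ) : Continuous (qval M) := by
  have : qval M = fun v => ∑ a, ∑ b, M a b * (v b * v a) := by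
    ext v; simp [qval, trace, mul_apply, vecMulVec_apply, diag]
  rw [this]
  continuity

/-- IVT: find a rotation making the first value zero. -/
lemma exists_rotation (M : Matrix (Fin n) (Fin n) ℝ) {i j : Fin n → ℝ}
    (hi : qval M i < 0) (hj : 0 < qval M j) :
    ∃ c s : ℝ, c^2 + s^2 = 1 ∧ qval M (c • j + s • i) = 0 := by
  set f : ℝ → ℝ := fun θ => qval M (Real.cos θ • j + Real.sin θ • i) with hf
  have hcont : Continuous f := by
    apply (qval_continuous M).comp
    fun_prop
  have h0 : f 0 = qval M j := by simp [hf]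
  have h1 : f (Real.pi/2) = qval M i := by simp [hf]
  have hab : (0:ℝ) ≤ Real.pi/2 := by positivity
  have := intermediate_value_Icc' hab hcont.continuousOn
  have hmem : (0:ℝ) ∈ Icc (f (Real.pi/2)) (f 0) := by
    rw [h0, h1]; exact ⟨le_of_lt hi, le_of_lt hj⟩
  obtain ⟨θ, _, hθ⟩ := this hmem
  exact ⟨Real.cos θ, Real.sin θ, by rw [← Real.sin_sq_add_cos_sq θ]; ring, hθ⟩

open Classical in
/-- Sturm's key lemma: a sum of rank-one matrices whose total value against `M` is
nonnegative can be rewritten as a sum of rank-one matrices each with nonnegative value. -/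
lemma sturm_key (M : Matrix (Fin n) (Fin n) ℝ) :
    ∀ (m : ℕ) (S : Multiset (Fin n → ℝ)),
      (S.filter (fun v => qval M v ≠ 0)).card ≤ m →
      0 ≤ (S.map (qval M)).sum →
      ∃ T : Multiset (Fin n → ℝ),
        (T.map rk).sum = (S.map rk).sum ∧ ∀ v ∈ T, 0 ≤ qval M v := by
  intro m
  induction m with
  | zero =>
    intro S hcard _
    refine ⟨S, rfl, fun v hv => ?_⟩
    rw [Nat.le_zero, Multiset.card_eq_zero] at hcard
    by_contra hneg
    have : v ∈ S.filter (fun v => qval M v ≠ 0) :=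
      Multiset.mem_filter.mpr ⟨hv, fun h => hneg (le_of_eq h.symm)⟩
    rw [hcard] at this
    exact absurd this (Multiset.notMem_zero v)
  | succ m ih =>
    intro S hcard hsum
    by_cases hall : ∀ v ∈ S, 0 ≤ qval M v
    · exact ⟨S, rfl, hall⟩
    push_neg at hall
    obtain ⟨i, hiS, hi⟩ := hall
    have hS1 : S = i ::ₘ S.erase i := (Multiset.cons_erase hiS).symm
    set S1 := S.erase i with hS1def
    have hsum1 : 0 < (S1.map (qval M)).sum := by
      rw [hS1, Multiset.map_cons, Multiset.sum_cons] at hsum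
      linarith
    have hj' : ∃ j ∈ S1, 0 < qval M j := by
      by_contra hc
      push_neg at hc
      have hneg : 0 ≤ (S1.map (fun v => -qval M v)).sum := by
        apply Multiset.sum_nonneg
        intro x hx
        obtain ⟨j, hjS, rfl⟩ := Multiset.mem_map.mp hx
        simpa using hc j hjS
      rw [show (fun v => -qval M v) = (Neg.neg ∘ qval M) from rfl, ← Multiset.map_map,
        Multiset.sum_map_neg'] at hneg
      linarith
    obtain ⟨j, hjS1, hj⟩ := hj'
    have hS2 : S1 = j ::ₘ S1.erase j := (Multiset.cons_erase hjS1).symm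
    set S2 := S1.erase j with hS2def
    obtain ⟨c, s, hcs, hu0⟩ := exists_rotation M hi hj
    set u := c • j + s • i with hu
    set w := (-s) • j + c • i with hw
    have hrk : rk u + rk w = rk j + rk i := rot_rk c s hcs i j
    have hq : qval M u + qval M w = qval M j + qval M i := qval_add_of_rk M hrk
    set T0 := u ::ₘ w ::ₘ S2 with hT0
    have hsumT0 : (T0.map (qval M)).sum = (S.map (qval M)).sum := by
      rw [hT0, hS1, hS2]
      simp only [Multiset.map_cons, Multiset.sum_cons]
      linarith
    have hrkT0 : (T0.map rk).sum = (S.map rk).sum := by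
      rw [hT0, hS1, hS2]
      simp only [Multiset.map_cons, Multiset.sum_cons]
      rw [← add_assoc, ← add_assoc, hrk]
      abel
    have hcardS : (S.filter (fun v => qval M v ≠ 0)).card
        = 2 + ((S2.filter (fun v => qval M v ≠ 0)).card) := by
      rw [hS1, hS2, Multiset.filter_cons_of_pos _ (by exact fun h => absurd h (ne_of_lt hi)),
        Multiset.filter_cons_of_pos _ (by exact fun h => absurd h (ne_of_gt hj))]
      simp [Multiset.card_cons]
      ring
    have hcardT0 : (T0.filter (fun v => qval M v ≠ 0)).card ≤ m := by
      rw [hT0, Multiset.filter_cons_of_neg _ (by simpa using hu0)]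
      rw [Multiset.filter_cons]
      have h2 : ((S2.filter (fun v => qval M v ≠ 0)).card) ≤ m - 1 := by omega
      by_cases hwq : qval M w ≠ 0
      · rw [if_pos hwq]
        rw [Multiset.card_add, Multiset.card_singleton]
        omega
      · rw [if_neg hwq, zero_add]
        omega
    obtain ⟨T, hT1, hT2⟩ := ih T0 hcardT0 (hsumT0 ▸ hsum)
    exact ⟨T, hT1.trans hrkT0, hT2⟩

/-- Every PSD matrix is a sum of rank-one matrices. -/
lemma psd_decomp {X : Matrix (Fin n) (Fin n) ℝ} (hX : X.PosSemidef) :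
    ∃ S : Multiset (Fin n → ℝ), (S.map rk).sum = X := by
  obtain ⟨B, hB⟩ : ∃ B : Matrix (Fin n) (Fin n) ℝ, X = Bᴴ * B := by
    open scoped MatrixOrder in exact CStarAlgebra.nonneg_iff_eq_star_mul_self.mp hX.nonneg
  refine ⟨Multiset.map (fun k => B k) Finset.univ.val, ?_⟩
  rw [Multiset.map_map]
  have h1 : (Multiset.map (rk ∘ fun k => B k) Finset.univ.val).sum = ∑ k, rk (B k) := rfl
  rw [h1, hB]
  ext a b
  simp [rk, mul_apply, vecMulVec_apply, Matrix.sum_apply, conjTranspose_apply, mul_comm]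

lemma qsum_eq (M : Matrix (Fin n) (Fin n) ℝ) (S : Multiset (Fin n → ℝ)) :
    (S.map (qval M)).sum = (M * (S.map rk).sum).trace := by
  induction S using Multiset.induction_on with
  | empty => simp
  | cons v S ih =>
    simp only [Multiset.map_cons, Multiset.sum_cons, mul_add, trace_add]
    rw [ih]
    rfl

lemma posSemidef_smul' {X : Matrix (Fin n) (Fin n) ℝ} (hX : X.PosSemidef) {c : ℝ}
    (hc : 0 ≤ c) : (c • X).PosSemidef := by
  rw [posSemidef_iff_dotProduct_mulVec]
  constructor
  · show (c • X)ᴴ = c • X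
    rw [conjTranspose_smul, hX.1]
    simp
  · intro x
    rw [smul_mulVec, dotProduct_smul, smul_eq_mul]
    exact mul_nonneg hc (hX.dotProduct_mulVec_nonneg x)

lemma scone_convex (M : Matrix (Fin n) (Fin n) ℝ) :
    Convex ℝ {X : Matrix (Fin n) (Fin n) ℝ | X.PosSemidef ∧ 0 ≤ (M * X).trace} := by
  intro X hX Y hY a b ha hb hab
  refine ⟨(posSemidef_smul' hX.1 ha).add (posSemidef_smul' hY.1 hb), ?_⟩
  rw [mul_add, trace_add, mul_smul_comm, mul_smul_comm, trace_smul, trace_smul]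
  have := hX.2; have := hY.2
  simp only [smul_eq_mul]
  nlinarith

end SturmAux

open SturmAux Pointwise in
theorem stmt_9 {n : ℕ} (M : Matrix (Fin n) (Fin n) ℝ) (hM : M.IsSymm) :
    IsROG (SCone {M}) := by
  classical
  set C : Set (Matrix (Fin n) (Fin n) ℝ) := SCone {M} ∩ RankOneSet n with hC
  -- membership of good rank-one matrices in C
  have hC_mem : ∀ v : Fin n → ℝ, 0 ≤ qval M v → rk v ∈ C := by
    intro v hv
    refine ⟨⟨vecMulVec_posSemidef v, ?_⟩, ⟨v, rfl⟩⟩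
    intro N hN
    rw [Set.mem_singleton_iff] at hN
    subst hN
    exact hv
  -- C is closed under nonnegative scaling
  have hC_smul : ∀ (c : ℝ), 0 ≤ c → ∀ A ∈ C, c • A ∈ C := by
    intro c hc A hA
    obtain ⟨hAS, v, rfl⟩ := hA
    have hq : 0 ≤ qval M v := hAS.2 M rfl
    have hrw : c • vecMulVec v v = rk (Real.sqrt c • v) := by
      rw [rk_smul, Real.mul_self_sqrt hc]; rfl
    rw [hrw]
    apply hC_mem
    show 0 ≤ (M * rk (Real.sqrt c • v)).trace
    rw [rk_smul, mul_smul_comm, trace_smul, Real.mul_self_sqrt hc, smul_eq_mul]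
    exact mul_nonneg hc hq
  -- convexHull C is closed under nonnegative scaling
  have hHull_smul : ∀ (c : ℝ), 0 ≤ c → ∀ A ∈ convexHull ℝ C, c • A ∈ convexHull ℝ C := by
    intro c hc A hA
    have h1 : c • A ∈ c • convexHull ℝ C := Set.smul_mem_smul_set hA
    have h2 : c • convexHull ℝ C = convexHull ℝ (c • C) := (convexHull_smul c C).symm
    rw [h2] at h1
    refine convexHull_mono ?_ h1
    rintro _ ⟨B, hB, rfl⟩
    exact hC_smul c hc B hB
  -- convexHull C is closed under addition
  have hHull_add : ∀ A ∈ convexHull ℝ C, ∀ B ∈ convexHull ℝ C,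
      A + B ∈ convexHull ℝ C := by
    intro A hA B hB
    have hmid : (1/2 : ℝ) • A + (1/2 : ℝ) • B ∈ convexHull ℝ C :=
      (convex_convexHull ℝ C) hA hB (by norm_num) (by norm_num) (by norm_num)
    have := hHull_smul 2 (by norm_num) _ hmid
    have heq : (2:ℝ) • ((1/2 : ℝ) • A + (1/2 : ℝ) • B) = A + B := by
      rw [smul_add, smul_smul, smul_smul]
      norm_num
    rwa [heq] at this
  have h0 : (0 : Matrix (Fin n) (Fin n) ℝ) ∈ convexHull ℝ C := by
    apply subset_convexHull
    have := hC_mem 0 (by simp [qval, rk_zero])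
    rwa [rk_zero] at this
  -- sums of good rank-one matrices are in the hull
  have hsum_mem : ∀ T : Multiset (Fin n → ℝ), (∀ v ∈ T, 0 ≤ qval M v) →
      (T.map rk).sum ∈ convexHull ℝ C := by
    intro T
    induction T using Multiset.induction_on with
    | empty => intro _; simpa using h0
    | cons v T ih =>
      intro hT
      rw [Multiset.map_cons, Multiset.sum_cons]
      exact hHull_add _ (subset_convexHull ℝ C (hC_mem v (hT v (Multiset.mem_cons_self v T))))
        _ (ih fun u hu => hT u (Multiset.mem_cons_of_mem hu))
  apply Set.Subset.antisymm
  · -- forward inclusion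
    intro X hX
    obtain ⟨S, hS⟩ := psd_decomp hX.1
    have hq : 0 ≤ (S.map (qval M)).sum := by
      rw [qsum_eq, hS]
      exact hX.2 M rfl
    obtain ⟨T, hT1, hT2⟩ := sturm_key M (S.filter (fun v => qval M v ≠ 0)).card S le_rfl hq
    have : X = (T.map rk).sum := by rw [hT1, hS]
    rw [this]
    exact hsum_mem T hT2
  · -- reverse inclusion
    have hconv : Convex ℝ (SCone {M} : Set (Matrix (Fin n) (Fin n) ℝ)) := by
      have heq : (SCone {M} : Set (Matrix (Fin n) (Fin n) ℝ))
          = {X | X.PosSemidef ∧ 0 ≤ (M * X).trace} := by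
        ext X
        simp [SCone]
      rw [heq]
      exact scone_convex M
    exact convexHull_min Set.inter_subset_left hconv
end
end

section
/- Let M₁, M₂ ∈ S^n and suppose there exists (α₁,α₂) ≠ (0,0) with α₁M₁ + α₂M₂ positive semidefinite. Then S({M₁,M₂}) = {X ⪰ 0 : ⟨M₁,X⟩ ≥ 0, ⟨M₂,X⟩ ≥ 0} is rank-one generated. -/
open Matrix Set
open Pointwise

noncomputable section

namespace StmtTenAux

variable {n : ℕ}

/-- quadratic form value -/
def qf (M : Matrix (Fin n) (Fin n) ℝ) (v : Fin n → ℝ) : ℝ := v ⬝ᵥ M.mulVec v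

/-- sum of outer products of a multiset of vectors -/
def XX (s : Multiset (Fin n → ℝ)) : Matrix (Fin n) (Fin n) ℝ :=
  (s.map fun v => vecMulVec v v).sum

/-- sum of quadratic form values -/
def QQ (M : Matrix (Fin n) (Fin n) ℝ) (s : Multiset (Fin n → ℝ)) : ℝ :=
  (s.map (qf M)).sum

lemma trace_mul_vmv (M : Matrix (Fin n) (Fin n) ℝ) (v : Fin n → ℝ) :
    (M * vecMulVec v v).trace = qf M v := by
  simp only [Matrix.trace, Matrix.diag, Matrix.mul_apply, vecMulVec_apply, qf, dotProduct,
    mulVec, Finset.mul_sum]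
  refine Finset.sum_congr rfl fun i _ => Finset.sum_congr rfl fun j _ => by ring

lemma qf_lin (M M' : Matrix (Fin n) (Fin n) ℝ) (γ δ : ℝ) (v : Fin n → ℝ) :
    qf (γ • M + δ • M') v = γ * qf M v + δ * qf M' v := by
  simp [qf, Matrix.add_mulVec, Matrix.smul_mulVec, dotProduct_add, dotProduct_smul,
    smul_eq_mul]

lemma qf_smul (M : Matrix (Fin n) (Fin n) ℝ) (c : ℝ) (v : Fin n → ℝ) :
    qf M (c • v) = c ^ 2 * qf M v := by
  simp only [qf, Matrix.mulVec_smul, dotProduct_smul, smul_dotProduct, smul_eq_mul]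
  ring

lemma qf_nonneg {N : Matrix (Fin n) (Fin n) ℝ} (hN : N.PosSemidef) (v : Fin n → ℝ) :
    0 ≤ qf N v := by
  have h := hN.dotProduct_mulVec_nonneg v
  have hsv : star v = v := funext fun i => star_trivial _
  rwa [hsv] at h

lemma XX_cons (v : Fin n → ℝ) (s : Multiset (Fin n → ℝ)) :
    XX (v ::ₘ s) = vecMulVec v v + XX s := by
  simp [XX]

lemma QQ_cons (M : Matrix (Fin n) (Fin n) ℝ) (v : Fin n → ℝ) (s : Multiset (Fin n → ℝ)) :
    QQ M (v ::ₘ s) = qf M v + QQ M s := by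
  simp [QQ]

lemma trace_XX (M : Matrix (Fin n) (Fin n) ℝ) (s : Multiset (Fin n → ℝ)) :
    (M * XX s).trace = QQ M s := by
  induction s using Multiset.induction_on with
  | empty => simp [XX, QQ]
  | cons a t ih =>
    rw [XX_cons, QQ_cons, Matrix.mul_add, Matrix.trace_add, trace_mul_vmv, ih]

lemma QQ_peel {s t : Multiset (Fin n → ℝ)} {v : Fin n → ℝ}
    (h : XX s = vecMulVec v v + XX t) (M : Matrix (Fin n) (Fin n) ℝ) :
    QQ M s = qf M v + QQ M t := by
  have h2 := congrArg (fun A => (M * A).trace) h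
  simpa [Matrix.mul_add, Matrix.trace_add, trace_mul_vmv, trace_XX] using h2

lemma QQ_nonneg {N : Matrix (Fin n) (Fin n) ℝ} (hN : N.PosSemidef)
    (s : Multiset (Fin n → ℝ)) : 0 ≤ QQ N s := by
  refine Multiset.sum_nonneg fun x hx => ?_
  obtain ⟨v, _, rfl⟩ := Multiset.mem_map.1 hx
  exact qf_nonneg hN v

lemma QQ_nonpos {M : Matrix (Fin n) (Fin n) ℝ} {s : Multiset (Fin n → ℝ)}
    (h : ∀ v ∈ s, qf M v ≤ 0) : QQ M s ≤ 0 := by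
  induction s using Multiset.induction_on with
  | empty => simp [QQ]
  | cons a t ih =>
    rw [QQ_cons]
    have h1 := h a (Multiset.mem_cons_self a t)
    have h2 := ih fun v hv => h v (Multiset.mem_cons_of_mem hv)
    linarith

lemma QQ_lin (M M' : Matrix (Fin n) (Fin n) ℝ) (γ δ : ℝ) (s : Multiset (Fin n → ℝ)) :
    QQ (γ • M + δ • M') s = γ * QQ M s + δ * QQ M' s := by
  induction s using Multiset.induction_on with
  | empty => simp [QQ]
  | cons a t ih => rw [QQ_cons, QQ_cons, QQ_cons, qf_lin, ih]; ring

lemma exists_nonneg_qf {M : Matrix (Fin n) (Fin n) ℝ} {s : Multiset (Fin n → ℝ)}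
    {x : Fin n → ℝ} (hx : x ∈ s) (hqx : qf M x < 0) (hQ : 0 ≤ QQ M s) :
    ∃ y ∈ s, 0 ≤ qf M y := by
  by_contra hcon
  push_neg at hcon
  obtain ⟨t, rfl⟩ := Multiset.exists_cons_of_mem hx
  rw [QQ_cons] at hQ
  have ht : QQ M t ≤ 0 :=
    QQ_nonpos fun v hv => le_of_lt (hcon v (Multiset.mem_cons_of_mem hv))
  linarith

lemma continuous_qf (M : Matrix (Fin n) (Fin n) ℝ) :
    Continuous fun v : Fin n → ℝ => qf M v := by
  simp only [qf, dotProduct, mulVec]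
  refine continuous_finset_sum _ fun i _ => (continuous_apply i).mul ?_
  exact continuous_finset_sum _ fun j _ => continuous_const.mul (continuous_apply j)

lemma rot_identity (x y : Fin n → ℝ) (c s : ℝ) (h : c ^ 2 + s ^ 2 = 1) :
    vecMulVec x x + vecMulVec y y =
      vecMulVec (c • x + s • y) (c • x + s • y) +
        vecMulVec ((-s) • x + c • y) ((-s) • x + c • y) := by
  ext i j
  simp only [Matrix.add_apply, vecMulVec_apply, Pi.add_apply, Pi.smul_apply, smul_eq_mul]
  linear_combination (- (x i * x j) - (y i * y j)) * h

lemma exists_root (M : Matrix (Fin n) (Fin n) ℝ) {x y : Fin n → ℝ}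
    (hx : qf M x ≤ 0) (hy : 0 ≤ qf M y) :
    ∃ c s : ℝ, c ^ 2 + s ^ 2 = 1 ∧ qf M (c • x + s • y) = 0 := by
  set f : ℝ → ℝ := fun θ => qf M (Real.cos θ • x + Real.sin θ • y) with hf
  have hcont : Continuous f :=
    (continuous_qf M).comp
      ((Real.continuous_cos.smul continuous_const).add
        (Real.continuous_sin.smul continuous_const))
  have hle : (0:ℝ) ≤ Real.pi / 2 := by positivity
  have hmem : (0:ℝ) ∈ Icc (f 0) (f (Real.pi / 2)) := by
    constructor
    · simpa [hf] using hx
    · simpa [hf] using hy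
  obtain ⟨θ, _, hθ⟩ := intermediate_value_Icc hle hcont.continuousOn hmem
  exact ⟨Real.cos θ, Real.sin θ, by
    simpa [add_comm] using Real.sin_sq_add_cos_sq θ, hθ⟩

lemma peel (M : Matrix (Fin n) (Fin n) ℝ) {s : Multiset (Fin n → ℝ)} {x y : Fin n → ℝ}
    (hx : x ∈ s) (hy : y ∈ s) (hqx : qf M x ≤ 0) (hqy : 0 ≤ qf M y) :
    ∃ v t, qf M v = 0 ∧ s.card = t.card + 1 ∧ XX s = vecMulVec v v + XX t := by
  rcases eq_or_lt_of_le hqx with h0 | hneg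
  · obtain ⟨t, rfl⟩ := Multiset.exists_cons_of_mem hx
    exact ⟨x, t, h0, by simp, by rw [XX_cons]⟩
  rcases eq_or_lt_of_le hqy with h0 | hpos
  · obtain ⟨t, rfl⟩ := Multiset.exists_cons_of_mem hy
    exact ⟨y, t, h0.symm, by simp, by rw [XX_cons]⟩
  obtain ⟨t, rfl⟩ := Multiset.exists_cons_of_mem hx
  have hyt : y ∈ t := by
    rcases Multiset.mem_cons.1 hy with rfl | hyt
    · exact absurd hpos (not_lt.2 hneg.le)
    · exact hyt
  obtain ⟨t₀, rfl⟩ := Multiset.exists_cons_of_mem hyt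
  obtain ⟨c, sθ, hcs, hroot⟩ := exists_root M hneg.le hqy
  refine ⟨c • x + sθ • y, ((-sθ) • x + c • y) ::ₘ t₀, hroot, by simp, ?_⟩
  rw [XX_cons, XX_cons, XX_cons, ← add_assoc, ← add_assoc, rot_identity x y c sθ hcs]

/-- Good decomposition wrt ordered pair of matrices. -/
def GD (M M' : Matrix (Fin n) (Fin n) ℝ) (s : Multiset (Fin n → ℝ)) : Prop :=
  ∃ g : Multiset (Fin n → ℝ), XX g = XX s ∧ ∀ v ∈ g, 0 ≤ qf M v ∧ 0 ≤ qf M' v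

/-- Single tight constraint: `QQ M s = 0`, goodness of the other from `δ > 0`. -/
lemma lem_T (M M' : Matrix (Fin n) (Fin n) ℝ) {γ δ : ℝ} (hδ : 0 < δ)
    (hN : (γ • M + δ • M').PosSemidef) :
    ∀ (m : ℕ) (s : Multiset (Fin n → ℝ)), s.card ≤ m → QQ M s = 0 → GD M M' s := by
  intro m
  induction m with
  | zero =>
    intro s hc _
    refine ⟨s, rfl, fun v hv => absurd hv ?_⟩
    rw [Multiset.card_eq_zero.1 (Nat.le_zero.1 hc)]
    simp
  | succ m ih =>
    intro s hc hQ
    rcases Multiset.empty_or_exists_mem s with rfl | ⟨x₀, hx₀⟩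
    · exact ⟨0, rfl, by simp⟩
    -- find a nonpositive element
    obtain ⟨x, hx, hqx⟩ : ∃ x ∈ s, qf M x ≤ 0 := by
      by_contra hcon
      push_neg at hcon
      obtain ⟨t, rfl⟩ := Multiset.exists_cons_of_mem hx₀
      rw [QQ_cons] at hQ
      have h1 := hcon x₀ (Multiset.mem_cons_self x₀ t)
      have h2 : 0 ≤ QQ M t := by
        refine Multiset.sum_nonneg fun a ha => ?_
        obtain ⟨w, hw, rfl⟩ := Multiset.mem_map.1 ha
        exact (hcon w (Multiset.mem_cons_of_mem hw)).le
      linarith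
    obtain ⟨y, hy, hqy⟩ : ∃ y ∈ s, 0 ≤ qf M y := by
      rcases lt_or_eq_of_le hqx with hlt | heq
      · exact exists_nonneg_qf hx hlt hQ.ge
      · exact ⟨x, hx, heq.ge⟩
    obtain ⟨v, t, hv0, hcard, hXX⟩ := peel M hx hy hqx hqy
    have hqv' : 0 ≤ qf M' v := by
      have h1 := qf_nonneg hN v
      rw [qf_lin, hv0] at h1
      nlinarith
    have hQt : QQ M t = 0 := by
      have := QQ_peel hXX M
      rw [hQ, hv0] at this
      linarith
    obtain ⟨g, hg, hgood⟩ := ih t (by omega) hQt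
    refine ⟨v ::ₘ g, ?_, ?_⟩
    · rw [XX_cons, hg, hXX]
    · intro w hw
      rcases Multiset.mem_cons.1 hw with rfl | hw
      · exact ⟨hv0.ge, hqv'⟩
      · exact hgood w hw

/-- Both tight: `QQ M s = 0`, `QQ M' s = 0`, `δ ≠ 0`. -/
lemma lem_T2 (M M' : Matrix (Fin n) (Fin n) ℝ) {γ δ : ℝ} (hδ : δ ≠ 0)
    (hN : (γ • M + δ • M').PosSemidef) :
    ∀ (m : ℕ) (s : Multiset (Fin n → ℝ)), s.card ≤ m → QQ M s = 0 → QQ M' s = 0 →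
      GD M M' s := by
  intro m
  induction m with
  | zero =>
    intro s hc _ _
    refine ⟨s, rfl, fun v hv => absurd hv ?_⟩
    rw [Multiset.card_eq_zero.1 (Nat.le_zero.1 hc)]; simp
  | succ m ih =>
    intro s hc hQ hQ'
    rcases Multiset.empty_or_exists_mem s with rfl | ⟨x₀, hx₀⟩
    · exact ⟨0, rfl, by simp⟩
    obtain ⟨x, hx, hqx⟩ : ∃ x ∈ s, qf M x ≤ 0 := by
      by_contra hcon
      push_neg at hcon
      obtain ⟨t, rfl⟩ := Multiset.exists_cons_of_mem hx₀
      rw [QQ_cons] at hQ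
      have h1 := hcon x₀ (Multiset.mem_cons_self x₀ t)
      have h2 : 0 ≤ QQ M t := by
        refine Multiset.sum_nonneg fun a ha => ?_
        obtain ⟨w, hw, rfl⟩ := Multiset.mem_map.1 ha
        exact (hcon w (Multiset.mem_cons_of_mem hw)).le
      linarith
    obtain ⟨y, hy, hqy⟩ : ∃ y ∈ s, 0 ≤ qf M y := by
      rcases lt_or_eq_of_le hqx with hlt | heq
      · exact exists_nonneg_qf hx hlt hQ.ge
      · exact ⟨x, hx, heq.ge⟩
    obtain ⟨v, t, hv0, hcard, hXX⟩ := peel M hx hy hqx hqy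
    -- qf (N) v = 0 since total is 0 and all values nonneg
    have hNv : qf (γ • M + δ • M') v = 0 := by
      have h1 := qf_nonneg hN v
      have h2 : 0 ≤ QQ (γ • M + δ • M') t := QQ_nonneg hN t
      have h3 := QQ_peel hXX (γ • M + δ • M')
      rw [QQ_lin, hQ, hQ'] at h3
      linarith
    have hqv' : qf M' v = 0 := by
      rw [qf_lin, hv0] at hNv
      have : δ * qf M' v = 0 := by linarith
      exact (mul_eq_zero.1 this).resolve_left hδ
    have hQt : QQ M t = 0 := by
      have := QQ_peel hXX M; rw [hQ, hv0] at this; linarith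
    have hQt' : QQ M' t = 0 := by
      have := QQ_peel hXX M'; rw [hQ', hqv'] at this; linarith
    obtain ⟨g, hg, hgood⟩ := ih t (by omega) hQt hQt'
    refine ⟨v ::ₘ g, by rw [XX_cons, hg, hXX], ?_⟩
    intro w hw
    rcases Multiset.mem_cons.1 hw with rfl | hw
    · exact ⟨hv0.ge, hqv'.ge⟩
    · exact hgood w hw

/-- `γ ≤ 0 < δ`: only constraint `M` matters. -/
lemma lem_S1 (M M' : Matrix (Fin n) (Fin n) ℝ) {γ δ : ℝ} (hγ : γ ≤ 0) (hδ : 0 < δ)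
    (hN : (γ • M + δ • M').PosSemidef) :
    ∀ (m : ℕ) (s : Multiset (Fin n → ℝ)), s.card ≤ m → 0 ≤ QQ M s → GD M M' s := by
  intro m
  induction m with
  | zero =>
    intro s hc _
    refine ⟨s, rfl, fun v hv => absurd hv ?_⟩
    rw [Multiset.card_eq_zero.1 (Nat.le_zero.1 hc)]; simp
  | succ m ih =>
    intro s hc hQ
    by_cases hall : ∀ x ∈ s, 0 ≤ qf M x
    · refine ⟨s, rfl, fun v hv => ⟨hall v hv, ?_⟩⟩
      have h1 := qf_nonneg hN v
      rw [qf_lin] at h1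
      have h2 := hall v hv
      nlinarith
    push_neg at hall
    obtain ⟨x, hx, hqx⟩ := hall
    obtain ⟨y, hy, hqy⟩ := exists_nonneg_qf hx hqx hQ
    obtain ⟨v, t, hv0, hcard, hXX⟩ := peel M hx hy hqx.le hqy
    have hqv' : 0 ≤ qf M' v := by
      have h1 := qf_nonneg hN v
      rw [qf_lin, hv0] at h1
      nlinarith
    have hQt : 0 ≤ QQ M t := by
      have := QQ_peel hXX M; rw [hv0] at this; linarith
    obtain ⟨g, hg, hgood⟩ := ih t (by omega) hQt
    refine ⟨v ::ₘ g, by rw [XX_cons, hg, hXX], ?_⟩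
    intro w hw
    rcases Multiset.mem_cons.1 hw with rfl | hw
    · exact ⟨hv0.ge, hqv'⟩
    · exact hgood w hw

/-- `γ = 0, δ < 0`. -/
lemma lem_S3 (M M' : Matrix (Fin n) (Fin n) ℝ) {δ : ℝ} (hδ : δ < 0)
    (hN : ((0:ℝ) • M + δ • M').PosSemidef) :
    ∀ (m : ℕ) (s : Multiset (Fin n → ℝ)), s.card ≤ m → 0 ≤ QQ M s → 0 ≤ QQ M' s →
      GD M M' s := by
  have hpt : ∀ v : Fin n → ℝ, qf M' v ≤ 0 := by
    intro v
    have h1 := qf_nonneg hN v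
    rw [qf_lin] at h1
    nlinarith
  intro m
  induction m with
  | zero =>
    intro s hc _ _
    refine ⟨s, rfl, fun v hv => absurd hv ?_⟩
    rw [Multiset.card_eq_zero.1 (Nat.le_zero.1 hc)]; simp
  | succ m ih =>
    intro s hc hQ hQ'
    have hQ'0 : QQ M' s = 0 :=
      le_antisymm (QQ_nonpos fun v _ => hpt v) hQ'
    by_cases hall : ∀ x ∈ s, 0 ≤ qf M x
    · refine ⟨s, rfl, fun v hv => ⟨hall v hv, ?_⟩⟩
      -- all qf M' vanish: nonpositive values summing to zero
      have hneg : ∀ x ∈ (s.map (qf M')).map (fun r : ℝ => -r), (0:ℝ) ≤ x := by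
        intro x hxm
        obtain ⟨r, hr, rfl⟩ := Multiset.mem_map.1 hxm
        obtain ⟨w, _, rfl⟩ := Multiset.mem_map.1 hr
        simpa using hpt w
      have hsum0 : ((s.map (qf M')).map (fun r : ℝ => -r)).sum = 0 := by
        have : ((s.map (qf M')).map (fun r : ℝ => -r)).sum = -QQ M' s := by
          simp [QQ, Multiset.sum_map_neg']
        rw [this, hQ'0, neg_zero]
      have hz := Multiset.all_zero_of_le_zero_le_of_sum_eq_zero hneg hsum0
          (-(qf M' v)) (Multiset.mem_map_of_mem _ (Multiset.mem_map_of_mem _ hv))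
      linarith
    push_neg at hall
    obtain ⟨x, hx, hqx⟩ := hall
    obtain ⟨y, hy, hqy⟩ := exists_nonneg_qf hx hqx hQ
    obtain ⟨v, t, hv0, hcard, hXX⟩ := peel M hx hy hqx.le hqy
    have hQt' : QQ M' t ≤ 0 := QQ_nonpos fun w _ => hpt w
    have hpeel' := QQ_peel hXX M'
    rw [hQ'0] at hpeel'
    have hqv' : qf M' v = 0 := le_antisymm (hpt v) (by linarith)
    have hQt : 0 ≤ QQ M t := by
      have := QQ_peel hXX M; rw [hv0] at this; linarith
    obtain ⟨g, hg, hgood⟩ := ih t (by omega) hQt (by linarith)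
    refine ⟨v ::ₘ g, by rw [XX_cons, hg, hXX], ?_⟩
    intro w hw
    rcases Multiset.mem_cons.1 hw with rfl | hw
    · exact ⟨hv0.ge, hqv'.ge⟩
    · exact hgood w hw

/-- vecMulVec of a scaled vector. -/
lemma vmv_smul (c : ℝ) (v : Fin n → ℝ) :
    vecMulVec (c • v) (c • v) = (c ^ 2) • vecMulVec v v := by
  ext i j
  simp only [vecMulVec_apply, Pi.smul_apply, Matrix.smul_apply, smul_eq_mul]
  ring

/-- split an outer product into two scaled copies -/
lemma vmv_split {τ : ℝ} (h0 : 0 ≤ τ) (h1 : τ ≤ 1) (v : Fin n → ℝ) :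
    vecMulVec v v =
      vecMulVec (Real.sqrt τ • v) (Real.sqrt τ • v) +
        vecMulVec (Real.sqrt (1 - τ) • v) (Real.sqrt (1 - τ) • v) := by
  rw [vmv_smul, vmv_smul, Real.sq_sqrt h0, Real.sq_sqrt (by linarith)]
  rw [← add_smul]
  norm_num

/-- Both coefficients positive. -/
lemma lem_S4 (M M' : Matrix (Fin n) (Fin n) ℝ) {γ δ : ℝ} (hγ : 0 < γ) (hδ : 0 < δ)
    (hN : (γ • M + δ • M').PosSemidef) :
    ∀ (m : ℕ) (s : Multiset (Fin n → ℝ)), s.card ≤ m → 0 ≤ QQ M s → 0 ≤ QQ M' s →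
      GD M M' s := by
  have hN' : (δ • M' + γ • M).PosSemidef := by rwa [add_comm] at hN
  intro m
  induction m with
  | zero =>
    intro s hc _ _
    refine ⟨s, rfl, fun v hv => absurd hv ?_⟩
    rw [Multiset.card_eq_zero.1 (Nat.le_zero.1 hc)]; simp
  | succ m ih =>
    intro s hc hQ hQ'
    by_cases hall : ∀ x ∈ s, 0 ≤ qf M x ∧ 0 ≤ qf M' x
    · exact ⟨s, rfl, hall⟩
    push_neg at hall
    obtain ⟨x, hx, hbad⟩ := hall
    by_cases hbad1 : qf M x < 0
    · -- bad in M
      obtain ⟨y, hy, hqy⟩ := exists_nonneg_qf hx hbad1 hQ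
      obtain ⟨v, t, hv0, hcard, hXX⟩ := peel M hx hy hbad1.le hqy
      have hqv' : 0 ≤ qf M' v := by
        have h1 := qf_nonneg hN v
        rw [qf_lin, hv0] at h1
        nlinarith
      have hQt : 0 ≤ QQ M t := by
        have := QQ_peel hXX M; rw [hv0] at this; linarith
      have hpeel' := QQ_peel hXX M'
      by_cases hle : qf M' v ≤ QQ M' s
      · obtain ⟨g, hg, hgood⟩ := ih t (by omega) hQt (by linarith)
        refine ⟨v ::ₘ g, by rw [XX_cons, hg, hXX], ?_⟩
        intro w hw
        rcases Multiset.mem_cons.1 hw with rfl | hw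
        · exact ⟨hv0.ge, hqv'⟩
        · exact hgood w hw
      · push_neg at hle
        have hv'pos : 0 < qf M' v := lt_of_le_of_lt hQ' hle
        set τ : ℝ := QQ M' s / qf M' v with hτ
        have hτ0 : 0 ≤ τ := div_nonneg hQ' hv'pos.le
        have hτ1 : τ ≤ 1 := by
          rw [hτ, div_le_one hv'pos]; exact hle.le
        set v₁ := Real.sqrt τ • v with hv₁
        set v₂ := Real.sqrt (1 - τ) • v with hv₂
        have hsplit := vmv_split hτ0 hτ1 v
        have hXX2 : XX s = vecMulVec v₁ v₁ + XX (v₂ ::ₘ t) := by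
          rw [XX_cons, hXX, hsplit, hv₁, hv₂]
          abel
        have hQs' : QQ M' (v₂ ::ₘ t) = 0 := by
          rw [QQ_cons, hv₂, qf_smul, Real.sq_sqrt (by linarith)]
          have hτv : τ * qf M' v = QQ M' s := div_mul_cancel₀ _ hv'pos.ne'
          nlinarith [hpeel']
        obtain ⟨g, hg, hgood⟩ :=
          lem_T M' M hγ hN' (v₂ ::ₘ t).card (v₂ ::ₘ t) le_rfl hQs'
        refine ⟨v₁ ::ₘ g, by rw [XX_cons, hg, hXX2], ?_⟩
        intro w hw
        rcases Multiset.mem_cons.1 hw with rfl | hw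
        · constructor
          · rw [hv₁, qf_smul, hv0]; simp
          · rw [hv₁, qf_smul, Real.sq_sqrt hτ0]
            positivity
        · exact (hgood w hw).symm
    · -- bad in M'
      have hbad2 : qf M' x < 0 := hbad (not_lt.1 hbad1)
      obtain ⟨y, hy, hqy⟩ := exists_nonneg_qf hx hbad2 hQ'
      obtain ⟨v, t, hv0, hcard, hXX⟩ := peel M' hx hy hbad2.le hqy
      have hqv : 0 ≤ qf M v := by
        have h1 := qf_nonneg hN v
        rw [qf_lin, hv0] at h1
        nlinarith
      have hQt' : 0 ≤ QQ M' t := by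
        have := QQ_peel hXX M'; rw [hv0] at this; linarith
      have hpeel := QQ_peel hXX M
      by_cases hle : qf M v ≤ QQ M s
      · obtain ⟨g, hg, hgood⟩ := ih t (by omega) (by linarith) hQt'
        refine ⟨v ::ₘ g, by rw [XX_cons, hg, hXX], ?_⟩
        intro w hw
        rcases Multiset.mem_cons.1 hw with rfl | hw
        · exact ⟨hqv, hv0.ge⟩
        · exact hgood w hw
      · push_neg at hle
        have hvpos : 0 < qf M v := lt_of_le_of_lt hQ hle
        set τ : ℝ := QQ M s / qf M v with hτ
        have hτ0 : 0 ≤ τ := div_nonneg hQ hvpos.le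
        have hτ1 : τ ≤ 1 := by
          rw [hτ, div_le_one hvpos]; exact hle.le
        set v₁ := Real.sqrt τ • v with hv₁
        set v₂ := Real.sqrt (1 - τ) • v with hv₂
        have hsplit := vmv_split hτ0 hτ1 v
        have hXX2 : XX s = vecMulVec v₁ v₁ + XX (v₂ ::ₘ t) := by
          rw [XX_cons, hXX, hsplit, hv₁, hv₂]
          abel
        have hQs : QQ M (v₂ ::ₘ t) = 0 := by
          rw [QQ_cons, hv₂, qf_smul, Real.sq_sqrt (by linarith)]
          have hτv : τ * qf M v = QQ M s := div_mul_cancel₀ _ hvpos.ne'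
          nlinarith [hpeel]
        obtain ⟨g, hg, hgood⟩ :=
          lem_T M M' hδ hN (v₂ ::ₘ t).card (v₂ ::ₘ t) le_rfl hQs
        refine ⟨v₁ ::ₘ g, by rw [XX_cons, hg, hXX2], ?_⟩
        intro w hw
        rcases Multiset.mem_cons.1 hw with rfl | hw
        · constructor
          · rw [hv₁, qf_smul, Real.sq_sqrt hτ0]
            positivity
          · rw [hv₁, qf_smul, hv0]; simp
        · exact hgood w hw

lemma GD.symm {M M' : Matrix (Fin n) (Fin n) ℝ} {s : Multiset (Fin n → ℝ)}
    (h : GD M M' s) : GD M' M s := by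
  obtain ⟨g, hg, hgood⟩ := h
  exact ⟨g, hg, fun v hv => (hgood v hv).symm⟩

lemma main_decomp (M₁ M₂ : Matrix (Fin n) (Fin n) ℝ) {α β : ℝ}
    (hab : ¬(α = 0 ∧ β = 0)) (hN : (α • M₁ + β • M₂).PosSemidef)
    (s : Multiset (Fin n → ℝ)) (h1 : 0 ≤ QQ M₁ s) (h2 : 0 ≤ QQ M₂ s) :
    GD M₁ M₂ s := by
  have hNc : (β • M₂ + α • M₁).PosSemidef := by rwa [add_comm] at hN
  rcases lt_trichotomy α 0 with hα | hα | hα <;> rcases lt_trichotomy β 0 with hβ | hβ | hβ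
  · -- α<0, β<0 : both tight
    have hQN := QQ_nonneg hN s
    rw [QQ_lin] at hQN
    have hq1 : QQ M₁ s = 0 := by nlinarith
    have hq2 : QQ M₂ s = 0 := by nlinarith
    exact lem_T2 M₁ M₂ hβ.ne hN s.card s le_rfl hq1 hq2
  · -- α<0, β=0
    subst hβ
    refine (lem_S3 M₂ M₁ hα ?_ s.card s le_rfl h2 h1).symm
    exact hNc
  · -- α<0, β>0
    exact lem_S1 M₁ M₂ hα.le hβ hN s.card s le_rfl h1
  · -- α=0, β<0
    subst hα
    exact lem_S3 M₁ M₂ hβ hN s.card s le_rfl h1 h2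
  · exact absurd ⟨hα, hβ⟩ hab
  · -- α=0, β>0
    subst hα
    exact lem_S1 M₁ M₂ le_rfl hβ hN s.card s le_rfl h1
  · -- α>0, β<0
    exact (lem_S1 M₂ M₁ hβ.le hα hNc s.card s le_rfl h2).symm
  · -- α>0, β=0
    subst hβ
    refine (lem_S1 M₂ M₁ le_rfl hα ?_ s.card s le_rfl h2).symm
    exact hNc
  · exact lem_S4 M₁ M₂ hα hβ hN s.card s le_rfl h1 h2

lemma vmv_posSemidef (v : Fin n → ℝ) : (vecMulVec v v).PosSemidef := by
  refine PosSemidef.of_dotProduct_mulVec_nonneg ?_ ?_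
  · ext i j
    simp [Matrix.conjTranspose_apply, vecMulVec_apply, mul_comm]
  · intro x
    have hs : star x = x := funext fun i => star_trivial _
    rw [hs]
    have h1 : vecMulVec v v *ᵥ x = (v ⬝ᵥ x) • v := by
      ext i
      simp [mulVec, vecMulVec_apply, dotProduct, Finset.mul_sum, Pi.smul_apply, smul_eq_mul,
        Finset.sum_mul, mul_comm, mul_left_comm]
    rw [h1]
    have h2 : x ⬝ᵥ (v ⬝ᵥ x) • v = (v ⬝ᵥ x) * (x ⬝ᵥ v) := by
      simp [dotProduct_smul, smul_eq_mul, mul_comm]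
    rw [h2, dotProduct_comm]
    exact mul_self_nonneg _
lemma vmv_mem_scone {M₁ M₂ : Matrix (Fin n) (Fin n) ℝ} {v : Fin n → ℝ}
    (h1 : 0 ≤ qf M₁ v) (h2 : 0 ≤ qf M₂ v) :
    vecMulVec v v ∈ SCone {M₁, M₂} := by
  refine ⟨vmv_posSemidef v, fun N hN => ?_⟩
  rcases hN with rfl | hN
  · rw [trace_mul_vmv]; exact h1
  · rw [Set.mem_singleton_iff.1 hN, trace_mul_vmv]; exact h2

lemma scone_convex (𝓜 : Set (Matrix (Fin n) (Fin n) ℝ)) : Convex ℝ (SCone 𝓜) := by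
  intro X hX Y hY a b ha hb hab
  refine ⟨PosSemidef.of_dotProduct_mulVec_nonneg ?_ ?_, ?_⟩
  · show (a • X + b • Y)ᴴ = a • X + b • Y
    rw [conjTranspose_add, conjTranspose_smul, conjTranspose_smul, hX.1.1, hY.1.1,
      star_trivial, star_trivial]
  · intro x
    have e : (a • X + b • Y) *ᵥ x = a • (X *ᵥ x) + b • (Y *ᵥ x) := by
      rw [Matrix.add_mulVec, Matrix.smul_mulVec, Matrix.smul_mulVec]
    rw [e, dotProduct_add, dotProduct_smul, dotProduct_smul]
    have q1 := hX.1.dotProduct_mulVec_nonneg x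
    have q2 := hY.1.dotProduct_mulVec_nonneg x
    have : ∀ r : ℝ, r • (star x ⬝ᵥ (X *ᵥ x)) = r * (star x ⬝ᵥ (X *ᵥ x)) := fun r => rfl
    exact add_nonneg (mul_nonneg ha q1) (mul_nonneg hb q2)
  · intro N hN
    have e : N * (a • X + b • Y) = a • (N * X) + b • (N * Y) := by
      rw [Matrix.mul_add, Matrix.mul_smul, Matrix.mul_smul]
    rw [e, Matrix.trace_add, Matrix.trace_smul, Matrix.trace_smul, smul_eq_mul, smul_eq_mul]
    exact add_nonneg (mul_nonneg ha (hX.2 N hN)) (mul_nonneg hb (hY.2 N hN))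

/-- the set of good rank-one matrices is closed under nonnegative scaling -/
lemma scone_r1_smul {M₁ M₂ : Matrix (Fin n) (Fin n) ℝ} {r : ℝ} (hr : 0 ≤ r)
    {A : Matrix (Fin n) (Fin n) ℝ} (hA : A ∈ SCone {M₁, M₂} ∩ RankOneSet n) :
    r • A ∈ SCone {M₁, M₂} ∩ RankOneSet n := by
  obtain ⟨hAS, x, rfl⟩ := hA
  have hx1 : 0 ≤ qf M₁ x := by rw [← trace_mul_vmv]; exact hAS.2 M₁ (Set.mem_insert _ _)
  have hx2 : 0 ≤ qf M₂ x := by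
    rw [← trace_mul_vmv]
    exact hAS.2 M₂ (Set.mem_insert_of_mem _ rfl)
  have key : r • vecMulVec x x = vecMulVec (Real.sqrt r • x) (Real.sqrt r • x) := by
    rw [vmv_smul, Real.sq_sqrt hr]
  rw [key]
  refine ⟨vmv_mem_scone ?_ ?_, ⟨_, rfl⟩⟩
  · rw [qf_smul, Real.sq_sqrt hr]; exact mul_nonneg hr hx1
  · rw [qf_smul, Real.sq_sqrt hr]; exact mul_nonneg hr hx2

lemma zero_mem_c (M₁ M₂ : Matrix (Fin n) (Fin n) ℝ) :
    (0 : Matrix (Fin n) (Fin n) ℝ) ∈ SCone {M₁, M₂} ∩ RankOneSet n := by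
  have h0 : (0 : Matrix (Fin n) (Fin n) ℝ) = vecMulVec (0 : Fin n → ℝ) 0 := by
    ext i j; simp [vecMulVec_apply]
  rw [h0]
  exact ⟨vmv_mem_scone (by simp [qf]) (by simp [qf]), ⟨_, rfl⟩⟩

/-- a multiset sum of elements of a cone lies in its convex hull -/
lemma sum_mem_hull {C : Set (Matrix (Fin n) (Fin n) ℝ)}
    (h0 : (0 : Matrix (Fin n) (Fin n) ℝ) ∈ C)
    (hsc : ∀ r : ℝ, 0 ≤ r → ∀ A ∈ C, r • A ∈ C)
    (g : Multiset (Matrix (Fin n) (Fin n) ℝ)) (hmem : ∀ A ∈ g, A ∈ C) :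
    g.sum ∈ convexHull ℝ C := by
  induction g using Multiset.induction_on with
  | empty => simpa using subset_convexHull ℝ C h0
  | cons a t ih =>
    have ha : a ∈ convexHull ℝ C := subset_convexHull ℝ C (hmem a (Multiset.mem_cons_self a t))
    have ht : t.sum ∈ convexHull ℝ C := ih fun A hA => hmem A (Multiset.mem_cons_of_mem hA)
    have hmid : (1/2 : ℝ) • a + (1/2 : ℝ) • t.sum ∈ convexHull ℝ C :=
      (convex_convexHull ℝ C) ha ht (by norm_num) (by norm_num) (by norm_num)
    have h2C : (2:ℝ) • C ⊆ C := by
      rintro _ ⟨A, hA, rfl⟩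
      exact hsc 2 (by norm_num) A hA
    have h2 : (2:ℝ) • ((1/2 : ℝ) • a + (1/2 : ℝ) • t.sum) ∈ convexHull ℝ C := by
      have : (2:ℝ) • ((1/2 : ℝ) • a + (1/2 : ℝ) • t.sum) ∈ (2:ℝ) • convexHull ℝ C :=
        Set.smul_mem_smul_set hmid
      rw [← convexHull_smul] at this
      exact convexHull_mono h2C this
    have key : (2:ℝ) • ((1/2 : ℝ) • a + (1/2 : ℝ) • t.sum) = a + t.sum := by
      rw [smul_add, smul_smul, smul_smul]
      norm_num
    rw [Multiset.sum_cons, ← key]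
    exact h2

end StmtTenAux

open StmtTenAux in
theorem stmt_10 {n : ℕ} (M₁ M₂ : Matrix (Fin n) (Fin n) ℝ)
    (h₁ : M₁.IsSymm) (h₂ : M₂.IsSymm)
    (h : ∃ α β : ℝ, (α, β) ≠ (0, 0) ∧ (α • M₁ + β • M₂).PosSemidef) :
    IsROG (SCone {M₁, M₂}) := by
  obtain ⟨α, β, hne, hN⟩ := h
  have hab : ¬(α = 0 ∧ β = 0) := by
    rintro ⟨rfl, rfl⟩; exact hne rfl
  refine subset_antisymm ?_ ?_
  · -- forward inclusion
    intro X hX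
    obtain ⟨B, hB⟩ : ∃ B : Matrix (Fin n) (Fin n) ℝ, X = Bᴴ * B := by
      open scoped MatrixOrder in
      obtain ⟨Y, hY, -, hYY⟩ := CFC.exists_sqrt_of_isSelfAdjoint_of_quasispectrumRestricts
        hX.1.isHermitian (QuasispectrumRestricts.nnreal_of_nonneg hX.1.nonneg)
      exact ⟨Y, by rw [← hYY, show Yᴴ = Y from hY.star_eq]⟩
    set s₀ : Multiset (Fin n → ℝ) := Finset.univ.val.map (fun k : Fin n => B k) with hs₀
    have hXs : X = XX s₀ := by
      have hxx : XX s₀ = ∑ k : Fin n, vecMulVec (B k) (B k) := by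
        rw [Finset.sum_eq_multiset_sum, hs₀, XX, Multiset.map_map]
        rfl
      rw [hxx, hB]
      ext i j
      rw [Matrix.sum_apply]
      simp only [Matrix.mul_apply, Matrix.conjTranspose_apply, vecMulVec_apply, star_trivial]
    have hQ1 : 0 ≤ QQ M₁ s₀ := by
      rw [← trace_XX, ← hXs]
      exact hX.2 M₁ (Set.mem_insert _ _)
    have hQ2 : 0 ≤ QQ M₂ s₀ := by
      rw [← trace_XX, ← hXs]
      exact hX.2 M₂ (Set.mem_insert_of_mem _ rfl)
    obtain ⟨g, hg, hgood⟩ := main_decomp M₁ M₂ hab hN s₀ hQ1 hQ2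
    have hXg : X = (g.map fun v => vecMulVec v v).sum := by
      rw [hXs, ← hg]; rfl
    rw [hXg]
    refine sum_mem_hull (zero_mem_c M₁ M₂) (fun r hr A hA => scone_r1_smul hr hA) _ ?_
    intro A hA
    obtain ⟨v, hv, rfl⟩ := Multiset.mem_map.1 hA
    exact ⟨vmv_mem_scone (hgood v hv).1 (hgood v hv).2, ⟨v, rfl⟩⟩
  · exact convexHull_min Set.inter_subset_left (scone_convex _)
end
end

section
/- Let M = {M₁,…,M_k} ⊆ S^n with k ≥ 2. If for every pair of distinct indices i, j there exists (α,β) ≠ (0,0) with αM_i + βM_j positive semidefinite, then S(M) = {X ⪰ 0 : ⟨M_i,X⟩ ≥ 0 ∀i} is rank-one generated. -/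
open Matrix Set

noncomputable section

namespace ROG
open Pointwise
variable {n k : ℕ}

lemma posSemidef_iff_eq_transpose_mul_self {A : Matrix (Fin n) (Fin n) ℝ} :
    A.PosSemidef ↔ ∃ B : Matrix (Fin n) (Fin n) ℝ, A = Bᴴ * B := by
  open scoped MatrixOrder in
  constructor
  · intro h
    obtain ⟨B, hB⟩ := CStarAlgebra.nonneg_iff_eq_star_mul_self.mp h.nonneg
    exact ⟨B, hB⟩
  · rintro ⟨B, rfl⟩
    exact posSemidef_conjTranspose_mul_self B

/-- quadratic form -/
def qf (A : Matrix (Fin n) (Fin n) ℝ) (x : Fin n → ℝ) : ℝ := x ⬝ᵥ A *ᵥ x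

lemma qf_nonneg {A : Matrix (Fin n) (Fin n) ℝ} (h : A.PosSemidef) (x : Fin n → ℝ) :
    0 ≤ qf A x := by simpa [qf] using h.dotProduct_mulVec_nonneg x

lemma mulVec_eq_zero {A : Matrix (Fin n) (Fin n) ℝ} (h : A.PosSemidef) {x : Fin n → ℝ}
    (h0 : qf A x = 0) : A *ᵥ x = 0 := by
  have := (h.dotProduct_mulVec_zero_iff x).mp
  simp only [star_trivial] at this; exact this h0

lemma symm_dot {A : Matrix (Fin n) (Fin n) ℝ} (hA : Aᵀ = A) (u v : Fin n → ℝ) :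
    u ⬝ᵥ A *ᵥ v = v ⬝ᵥ A *ᵥ u := by
  rw [dotProduct_mulVec, ← mulVec_transpose, hA, dotProduct_comm]

lemma psd_symm {A : Matrix (Fin n) (Fin n) ℝ} (h : A.PosSemidef) : Aᵀ = A := by
  have := h.1; rwa [Matrix.IsHermitian, conjTranspose_eq_transpose_of_trivial] at this

lemma qf_add {A : Matrix (Fin n) (Fin n) ℝ} (hA : Aᵀ = A) (u v : Fin n → ℝ) :
    qf A (u + v) = qf A u + 2 * (u ⬝ᵥ A *ᵥ v) + qf A v := by
  simp only [qf, mulVec_add, dotProduct_add, add_dotProduct]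
  rw [symm_dot hA v u]; ring

lemma qf_smul (A : Matrix (Fin n) (Fin n) ℝ) (r : ℝ) (u : Fin n → ℝ) :
    qf A (r • u) = r^2 * qf A u := by
  simp [qf, mulVec_smul, smul_dotProduct, dotProduct_smul]; ring

/-- Cauchy-Schwarz for PSD quadratic forms -/
lemma psd_cs {A : Matrix (Fin n) (Fin n) ℝ} (h : A.PosSemidef) (u w : Fin n → ℝ) :
    (u ⬝ᵥ A *ᵥ w)^2 ≤ qf A u * qf A w := by
  have hs := psd_symm h
  have key : ∀ t : ℝ, 0 ≤ qf A w * (t*t) + (2 * (u ⬝ᵥ A *ᵥ w)) * t + qf A u := by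
    intro t
    have := qf_nonneg h (u + t • w)
    rw [qf_add hs, qf_smul] at this
    have h2 : u ⬝ᵥ A *ᵥ (t • w) = t * (u ⬝ᵥ A *ᵥ w) := by
      simp [mulVec_smul, dotProduct_smul]
    rw [h2] at this; nlinarith [this]
  have := discrim_le_zero key
  rw [discrim] at this; nlinarith [this]


lemma vecMulVec_mulVec (x y u : Fin n → ℝ) :
    (vecMulVec x y) *ᵥ u = (y ⬝ᵥ u) • x := by
  ext i
  simp only [vecMulVec_apply, Matrix.mulVec, dotProduct, Pi.smul_apply, smul_eq_mul,
    Finset.sum_mul]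
  exact Finset.sum_congr rfl fun j _ => by ring

lemma vecMulVec_transpose (x y : Fin n → ℝ) : (vecMulVec x y)ᵀ = vecMulVec y x := by
  ext i j; simp [vecMulVec_apply, mul_comm]

lemma vecMulVec_posSemidef (x : Fin n → ℝ) : (vecMulVec x x).PosSemidef := by
  apply Matrix.PosSemidef.of_dotProduct_mulVec_nonneg
  · rw [Matrix.IsHermitian, conjTranspose_eq_transpose_of_trivial, vecMulVec_transpose]
  · intro u
    simp only [star_trivial, vecMulVec_mulVec, dotProduct_smul]
    have : x ⬝ᵥ u = u ⬝ᵥ x := dotProduct_comm _ _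
    rw [this]; exact mul_self_nonneg _

lemma qf_vecMulVec (A : Matrix (Fin n) (Fin n) ℝ) (x : Fin n → ℝ) :
    (A * vecMulVec x x).trace = qf A x := by
  simp only [Matrix.trace, Matrix.diag, Matrix.mul_apply, vecMulVec_apply, qf, dotProduct,
    Matrix.mulVec, Finset.mul_sum]
  exact Finset.sum_congr rfl fun i _ => Finset.sum_congr rfl fun j _ => by ring

lemma vecMulVec_smul_smul (r : ℝ) (x : Fin n → ℝ) :
    vecMulVec (r • x) (r • x) = (r^2) • vecMulVec x x := by
  ext i j; simp [vecMulVec_apply]; ring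

/-- trace of product of PSD matrices is nonneg, and zero iff product zero -/
lemma trace_psd_mul {A B : Matrix (Fin n) (Fin n) ℝ} (hA : A.PosSemidef) (hB : B.PosSemidef) :
    0 ≤ (A * B).trace ∧ ((A * B).trace = 0 → A * B = 0) := by
  obtain ⟨P, hP⟩ := (posSemidef_iff_eq_transpose_mul_self).mp hA
  obtain ⟨Q, hQ⟩ := (posSemidef_iff_eq_transpose_mul_self).mp hB
  rw [conjTranspose_eq_transpose_of_trivial] at hP hQ
  subst hP hQ
  have htr : (Pᵀ * P * (Qᵀ * Q)).trace = ((P * Qᵀ) * (P * Qᵀ)ᵀ).trace := by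
    rw [transpose_mul, transpose_transpose]
    rw [show Pᵀ * P * (Qᵀ * Q) = Pᵀ * (P * Qᵀ * Q) by noncomm_ring]
    rw [Matrix.trace_mul_comm, show P * Qᵀ * Q * Pᵀ = P * Qᵀ * (Q * Pᵀ) by noncomm_ring]
  have hsum : ((P * Qᵀ) * (P * Qᵀ)ᵀ).trace = ∑ i, ∑ j, ((P * Qᵀ) i j)^2 := by
    simp only [Matrix.trace, Matrix.diag, Matrix.mul_apply, Matrix.transpose_apply, sq]
  constructor
  · rw [htr, hsum]; positivity
  · intro h0
    rw [htr, hsum] at h0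
    have hz : ∀ i j, (P * Qᵀ) i j = 0 := by
      intro i j
      have h1 : ∀ i ∈ Finset.univ (α := Fin n), (0:ℝ) ≤ ∑ j, ((P * Qᵀ) i j)^2 := by
        intro i _; positivity
      have h2 := (Finset.sum_eq_zero_iff_of_nonneg h1).mp h0 i (Finset.mem_univ i)
      have h3 : ∀ j ∈ Finset.univ (α := Fin n), (0:ℝ) ≤ ((P * Qᵀ) i j)^2 := by
        intro j _; positivity
      have := (Finset.sum_eq_zero_iff_of_nonneg h3).mp h2 j (Finset.mem_univ j)
      exact pow_eq_zero_iff (two_ne_zero) |>.mp this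
    have hPQ : P * Qᵀ = 0 := by ext i j; exact hz i j
    calc Pᵀ * P * (Qᵀ * Q) = Pᵀ * (P * Qᵀ) * Q := by noncomm_ring
    _ = 0 := by rw [hPQ]; simp

/-- trace formula over a Gram decomposition -/
lemma trace_formula (A : Matrix (Fin n) (Fin n) ℝ) (B : Matrix (Fin n) (Fin n) ℝ) :
    (A * (Bᵀ * B)).trace = ∑ l, qf A (B l) := by
  have hdec : Bᵀ * B = ∑ l, vecMulVec (B l) (B l) := by
    ext i j
    rw [Matrix.sum_apply]
    simp only [Matrix.mul_apply, vecMulVec_apply, Matrix.transpose_apply]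
  rw [hdec, Matrix.mul_sum, Matrix.trace_sum]
  exact Finset.sum_congr rfl fun l _ => qf_vecMulVec A (B l)

/-- rows of B lie in the range of (BᵀB) -/
lemma row_mem_range (B : Matrix (Fin n) (Fin n) ℝ) (l : Fin n) :
    B l ∈ LinearMap.range (Bᵀ * B).mulVecLin := by
  have hle : LinearMap.range (Bᵀ * B).mulVecLin ≤ LinearMap.range Bᵀ.mulVecLin := by
    rintro x ⟨v, rfl⟩
    exact ⟨B.mulVecLin v, by simp [Matrix.mulVecLin_mul]⟩
  have hfr : Module.finrank ℝ (LinearMap.range Bᵀ.mulVecLin) ≤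
      Module.finrank ℝ (LinearMap.range (Bᵀ * B).mulVecLin) := by
    have h1 : (Bᵀ * B).rank = B.rank := Matrix.rank_transpose_mul_self B
    have h2 : Bᵀ.rank = B.rank := Matrix.rank_transpose B
    simp only [Matrix.rank] at h1 h2
    omega
  have := Submodule.eq_of_le_of_finrank_le hle hfr
  rw [this]
  exact ⟨Pi.single l 1, by simp [Matrix.mulVec_single_one]; rfl⟩


def Indep (a b : Fin n → ℝ) : Prop := ∀ r s : ℝ, r • a + s • b = 0 → r = 0 ∧ s = 0

lemma of_not_indep {a b : Fin n → ℝ} (h : ¬ Indep a b) :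
    ∃ r s : ℝ, ¬(r = 0 ∧ s = 0) ∧ r • a + s • b = 0 := by
  simp only [Indep, not_forall] at h
  obtain ⟨r, s, hrs, hne⟩ := h
  exact ⟨r, s, hne, hrs⟩

/-- A PSD matrix with no two independent elements in its range is a rank-one outer product. -/
lemma psd_rank_le_one {X : Matrix (Fin n) (Fin n) ℝ} (hX : X.PosSemidef)
    (hdep : ∀ a ∈ LinearMap.range X.mulVecLin, ∀ b ∈ LinearMap.range X.mulVecLin, ¬ Indep a b) :
    ∃ x, X = vecMulVec x x := by
  by_cases hX0 : X = 0
  · exact ⟨0, by subst hX0; ext i j; simp [vecMulVec_apply]⟩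
  have hs := psd_symm hX
  -- find i with X i i ≠ 0
  have hqe : ∀ i : Fin n, qf X (Pi.single i 1) = X i i := by
    intro i; simp [qf, Matrix.mulVec_single_one, dotProduct, Pi.single_apply]
  obtain ⟨i, hi⟩ : ∃ i, X i i ≠ 0 := by
    by_contra hcon
    push_neg at hcon
    apply hX0
    have hcol : ∀ i, X *ᵥ Pi.single i 1 = 0 := by
      intro i
      exact mulVec_eq_zero hX (by rw [hqe i, hcon i])
    ext j m
    have := congrFun (hcol m) j
    rwa [Matrix.mulVec_single_one] at this
  set c := X i i with hc
  have h0c : 0 ≤ X i i := by rw [← hqe i]; exact qf_nonneg hX _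
  have hcpos : 0 < c := lt_of_le_of_ne (hc ▸ h0c) (Ne.symm hi)
  set x := X *ᵥ Pi.single i 1 with hxdef
  have hxi : x i = c := by rw [hxdef, Matrix.mulVec_single_one]; rfl
  have hxne : x ≠ 0 := by
    intro h0
    apply hi
    rw [← hxi, h0, Pi.zero_apply]
  have hXu : ∀ u, X *ᵥ u = (c⁻¹ * (x ⬝ᵥ u)) • x := by
    intro u
    obtain ⟨r, s, hne, hrel⟩ := of_not_indep
      (hdep x ⟨Pi.single i 1, rfl⟩ (X *ᵥ u) ⟨u, rfl⟩)
    have hsne : s ≠ 0 := by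
      rintro rfl
      have hrne : r ≠ 0 := fun h0 => hne ⟨h0, rfl⟩
      apply hxne
      have : r • x = 0 := by simpa using hrel
      simpa [hrne] using (smul_eq_zero.mp this)
    have hXu : X *ᵥ u = (-r/s) • x := by
      have : s • (X *ᵥ u) = (-r) • x := by
        rw [neg_smul, eq_neg_iff_add_eq_zero, add_comm]; exact hrel
      calc X *ᵥ u = s⁻¹ • (s • (X *ᵥ u)) := by rw [smul_smul, inv_mul_cancel₀ hsne, one_smul]
      _ = s⁻¹ • ((-r) • x) := by rw [this]
      _ = (-r/s) • x := by rw [smul_smul]; congr 1; rw [div_eq_mul_inv, mul_comm]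
    have hdot : x ⬝ᵥ u = (-r/s) * c := by
      calc x ⬝ᵥ u = u ⬝ᵥ x := dotProduct_comm _ _
      _ = Pi.single i 1 ⬝ᵥ X *ᵥ u := (symm_dot hs _ _).symm
      _ = Pi.single i 1 ⬝ᵥ ((-r/s) • x) := by rw [hXu]
      _ = (-r/s) * c := by
          rw [dotProduct_smul, ← hxi]; simp [dotProduct, Pi.single_apply]
    rw [hdot, hXu]
    congr 1
    field_simp
  refine ⟨(Real.sqrt c⁻¹) • x, ?_⟩
  rw [vecMulVec_smul_smul, Real.sq_sqrt (by positivity)]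
  ext j m
  have := congrFun (hXu (Pi.single m 1)) j
  rw [Matrix.mulVec_single_one] at this
  have hxm : x ⬝ᵥ Pi.single m 1 = x m := by simp [dotProduct, Pi.single_apply]
  rw [hxm] at this
  simp only [Pi.smul_apply, smul_eq_mul] at this ⊢
  rw [Matrix.smul_apply, vecMulVec_apply]
  rw [show X j m = X.col m j from rfl, this, smul_eq_mul]
  ring

/-- Schur complement style subtraction -/
lemma schur_psd {X : Matrix (Fin n) (Fin n) ℝ} (hX : X.PosSemidef) (w : Fin n → ℝ)
    {t : ℝ} (ht0 : 0 ≤ t) (hc : 0 < w ⬝ᵥ X *ᵥ w) (htle : t ≤ (w ⬝ᵥ X *ᵥ w)⁻¹) :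
    (X - t • vecMulVec (X *ᵥ w) (X *ᵥ w)).PosSemidef := by
  apply Matrix.PosSemidef.of_dotProduct_mulVec_nonneg
  · rw [Matrix.IsHermitian, conjTranspose_eq_transpose_of_trivial, transpose_sub,
      transpose_smul, vecMulVec_transpose, psd_symm hX]
  · intro u
    have h1 : (X *ᵥ w) ⬝ᵥ u = u ⬝ᵥ X *ᵥ w := dotProduct_comm _ _
    have hexp : u ⬝ᵥ (X - t • vecMulVec (X *ᵥ w) (X *ᵥ w)) *ᵥ u
        = u ⬝ᵥ X *ᵥ u - t * (u ⬝ᵥ X *ᵥ w)^2 := by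
      simp only [Matrix.sub_mulVec, dotProduct_sub, smul_mulVec, dotProduct_smul,
        vecMulVec_mulVec, smul_eq_mul, h1]
      ring
    simp only [star_trivial]
    rw [hexp]
    have hcs : (u ⬝ᵥ X *ᵥ w)^2 ≤ qf X u * (w ⬝ᵥ X *ᵥ w) := psd_cs hX u w
    have hqu : 0 ≤ qf X u := qf_nonneg hX u
    have h2 : t * (u ⬝ᵥ X *ᵥ w)^2 ≤ (w ⬝ᵥ X *ᵥ w)⁻¹ * (qf X u * (w ⬝ᵥ X *ᵥ w)) :=
      mul_le_mul htle hcs (sq_nonneg _) (le_of_lt (inv_pos.mpr hc))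
    have h3 : (w ⬝ᵥ X *ᵥ w)⁻¹ * (qf X u * (w ⬝ᵥ X *ᵥ w)) = qf X u := by field_simp
    have h4 : u ⬝ᵥ X *ᵥ u = qf X u := rfl
    linarith

/-- convex hull of a set closed under doubling is closed under addition -/
lemma add_mem_convexHull {E : Type*} [AddCommGroup E] [Module ℝ E] {s : Set E}
    (hs : ∀ Z ∈ s, (2:ℝ) • Z ∈ s) {A B : E}
    (hA : A ∈ convexHull ℝ s) (hB : B ∈ convexHull ℝ s) : A + B ∈ convexHull ℝ s := by
  have hmem : (1/2:ℝ) • A + (1/2:ℝ) • B ∈ convexHull ℝ s :=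
    (convex_convexHull ℝ s) hA hB (by norm_num) (by norm_num) (by norm_num)
  have h2 : A + B = (2:ℝ) • ((1/2:ℝ) • A + (1/2:ℝ) • B) := by
    rw [smul_add, smul_smul, smul_smul]; norm_num
  rw [h2]
  have : (2:ℝ) • ((1/2:ℝ) • A + (1/2:ℝ) • B) ∈ (2:ℝ) • (convexHull ℝ s) :=
    Set.smul_mem_smul_set hmem
  rw [← convexHull_smul] at this
  refine convexHull_mono ?_ this
  rintro z ⟨y, hy, rfl⟩
  exact hs y hy


lemma qf_continuous (A : Matrix (Fin n) (Fin n) ℝ) : Continuous (qf A) := by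
  have : qf A = fun x => ∑ i, x i * ∑ j, A i j * x j := by
    funext x; simp [qf, dotProduct, Matrix.mulVec]
  rw [this]
  exact continuous_finset_sum _ fun i _ => (continuous_apply i).mul
    (continuous_finset_sum _ fun j _ => continuous_const.mul (continuous_apply j))

lemma indep_symm {a b : Fin n → ℝ} (h : Indep a b) : Indep b a := by
  intro r s hrs
  have := h s r (by rw [add_comm]; exact hrs)
  exact ⟨this.2, this.1⟩

lemma indep_left_ne_zero {a b : Fin n → ℝ} (h : Indep a b) : a ≠ 0 := by
  intro h0
  have := h 1 0 (by rw [h0]; simp)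
  simp at this

/-- the punctured submodule is preconnected, given two independent elements -/
lemma preconnected_punctured {V : Submodule ℝ (Fin n → ℝ)} {a b : Fin n → ℝ}
    (ha : a ∈ V) (hb : b ∈ V) (hab : Indep a b) :
    IsPreconnected {x | x ∈ V ∧ x ≠ (0 : Fin n → ℝ)} := by
  set T : Set (Fin n → ℝ) := {x | x ∈ V ∧ x ≠ 0} with hT
  have hseg : ∀ p q : Fin n → ℝ, p ∈ V → q ∈ V → Indep p q → JoinedIn T p q := by
    intro p q hp hq hpq
    apply JoinedIn.of_segment_subset
    rintro z ⟨u, v, hu, hv, huv, rfl⟩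
    constructor
    · exact V.add_mem (V.smul_mem u hp) (V.smul_mem v hq)
    · intro h0
      obtain ⟨hu0, hv0⟩ := hpq u v h0
      rw [hu0, hv0] at huv; norm_num at huv
  have haT : a ∈ T := ⟨ha, indep_left_ne_zero hab⟩
  have key : IsPathConnected T := by
    refine ⟨a, haT, ?_⟩
    rintro y ⟨hyV, hy0⟩
    by_cases hay : Indep a y
    · exact hseg a y ha hyV hay
    · obtain ⟨r, s, hne, hrel⟩ := of_not_indep hay
      have hsne : s ≠ 0 := by
        rintro rfl
        simp only [zero_smul, add_zero] at hrel
        rcases smul_eq_zero.mp hrel with h | h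
        · exact hne ⟨h, rfl⟩
        · exact indep_left_ne_zero hab h
      have hyeq : y = (-r/s) • a := by
        have : s • y = (-r) • a := by
          rw [neg_smul, eq_neg_iff_add_eq_zero, add_comm]; exact hrel
        calc y = s⁻¹ • (s • y) := by rw [smul_smul, inv_mul_cancel₀ hsne, one_smul]
        _ = s⁻¹ • ((-r) • a) := by rw [this]
        _ = (-r/s) • a := by rw [smul_smul, div_eq_mul_inv, mul_comm]
      have hlam : (-r/s) ≠ 0 := by
        intro h0
        rw [hyeq, h0, zero_smul] at hy0; exact hy0 rfl
      have hby : Indep b y := by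
        intro p q hpq
        rw [hyeq, smul_smul] at hpq
        have := hab (q * (-r/s)) p (by rw [add_comm]; exact hpq)
        refine ⟨this.2, ?_⟩
        rcases mul_eq_zero.mp this.1 with h | h
        · exact h
        · exact absurd h hlam
      exact (hseg a b ha hb hab).trans (hseg b y hb hyV hby)
  exact key.isConnected.isPreconnected

/-- key covering lemma for pairwise nested-or-disjoint open covers of a preconnected set -/
lemma cover_lemma {α ι : Type*} [TopologicalSpace α] {T : Set α} (hT : IsPreconnected T)
    (hTne : T.Nonempty) (U : ι → Set α) :
    ∀ (N : ℕ) (s : Finset ι), s.card ≤ N → (∀ i ∈ s, IsOpen (U i)) →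
    (∀ i ∈ s, ∀ j ∈ s, i ≠ j → U i ⊆ U j ∨ U j ⊆ U i ∨ Disjoint (U i) (U j)) →
    T ⊆ ⋃ i ∈ s, U i → ∃ i ∈ s, T ⊆ U i := by
  intro N
  induction N with
  | zero =>
    intro s hcard _ _ hcov
    rw [Nat.le_zero, Finset.card_eq_zero] at hcard
    subst hcard
    simp only [Finset.notMem_empty, iUnion_of_empty, iUnion_empty] at hcov
    obtain ⟨x, hx⟩ := hTne
    exact absurd (hcov hx) (notMem_empty x)
  | succ N ih =>
    intro s hcard hopen htri hcov
    classical
    rcases Finset.eq_empty_or_nonempty s with rfl | ⟨j₀, hj₀⟩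
    · simp only [Finset.notMem_empty, iUnion_of_empty, iUnion_empty] at hcov
      obtain ⟨x, hx⟩ := hTne
      exact absurd (hcov hx) (notMem_empty x)
    by_cases habs : ∃ j ∈ s.erase j₀, U j₀ ⊆ U j
    · obtain ⟨j₁, hj₁, habs⟩ := habs
      have hcov' : T ⊆ ⋃ i ∈ s.erase j₀, U i := by
        intro x hx
        obtain ⟨i, hi⟩ := mem_iUnion.mp (hcov hx)
        simp only [mem_iUnion, exists_prop] at hi ⊢
        obtain ⟨his, hxi⟩ := hi
        by_cases hij : i = j₀
        · exact ⟨j₁, hj₁, habs (hij ▸ hxi)⟩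
        · exact ⟨i, Finset.mem_erase.mpr ⟨hij, his⟩, hxi⟩
      obtain ⟨i, hi, hTi⟩ := ih (s.erase j₀)
        (by have := Finset.card_erase_of_mem hj₀; omega)
        (fun i hi => hopen i (Finset.mem_of_mem_erase hi))
        (fun i hi j hj hij => htri i (Finset.mem_of_mem_erase hi) j (Finset.mem_of_mem_erase hj) hij)
        hcov'
      exact ⟨i, Finset.mem_of_mem_erase hi, hTi⟩
    · push_neg at habs
      set W : Set α := ⋃ j ∈ (s.erase j₀).filter (fun j => ¬ U j ⊆ U j₀), U j with hW
      have hWopen : IsOpen W :=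
        isOpen_biUnion fun j hj => hopen j (Finset.mem_of_mem_erase (Finset.mem_of_mem_filter _ hj))
      have hdisj : Disjoint (U j₀) W := by
        apply Set.disjoint_iUnion₂_right.mpr
        intro j hj
        rw [Finset.mem_filter] at hj
        obtain ⟨hjer, hnsub⟩ := hj
        have hjs := Finset.mem_of_mem_erase hjer
        have hne : j₀ ≠ j := fun h => (Finset.mem_erase.mp hjer).1 h.symm
        rcases htri j₀ hj₀ j hjs hne with h | h | h
        · exact absurd h (habs j hjer)
        · exact absurd h hnsub
        · exact h
      have hcov2 : T ⊆ U j₀ ∪ W := by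
        intro x hx
        obtain ⟨i, hi⟩ := mem_iUnion.mp (hcov hx)
        simp only [mem_iUnion, exists_prop] at hi
        obtain ⟨his, hxi⟩ := hi
        by_cases hij : i = j₀
        · exact Or.inl (hij ▸ hxi)
        · by_cases hsub : U i ⊆ U j₀
          · exact Or.inl (hsub hxi)
          · refine Or.inr (mem_biUnion ?_ hxi)
            exact Finset.mem_filter.mpr ⟨Finset.mem_erase.mpr ⟨hij, his⟩, hsub⟩
      rcases hT.subset_or_subset (hopen j₀ hj₀) hWopen hdisj hcov2 with h | h
      · exact ⟨j₀, hj₀, h⟩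
      · have hcov' : T ⊆ ⋃ i ∈ s.erase j₀, U i := by
          refine h.trans ?_
          apply Set.iUnion₂_subset
          intro j hj
          have := Finset.mem_of_mem_filter _ hj
          exact Set.subset_biUnion_of_mem (u := fun i => U i) this
        obtain ⟨i, hi, hTi⟩ := ih (s.erase j₀)
          (by have := Finset.card_erase_of_mem hj₀; omega)
          (fun i hi => hopen i (Finset.mem_of_mem_erase hi))
          (fun i hi j hj hij => htri i (Finset.mem_of_mem_erase hi) j (Finset.mem_of_mem_erase hj) hij)
          hcov'
        exact ⟨i, Finset.mem_of_mem_erase hi, hTi⟩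


-- small helpers
lemma qf_zero (A : Matrix (Fin n) (Fin n) ℝ) : qf A (0 : Fin n → ℝ) = 0 := by
  simp [qf]

lemma qf_comb (A C : Matrix (Fin n) (Fin n) ℝ) (α β : ℝ) (v : Fin n → ℝ) :
    qf (α • A + β • C) v = α * qf A v + β * qf C v := by
  simp [qf, Matrix.add_mulVec, Matrix.smul_mulVec, dotProduct_add, dotProduct_smul]

lemma trace_comb (A C X : Matrix (Fin n) (Fin n) ℝ) (α β : ℝ) :
    ((α • A + β • C) * X).trace = α * (A * X).trace + β * (C * X).trace := by
  rw [Matrix.add_mul, Matrix.smul_mul, Matrix.smul_mul, Matrix.trace_add, Matrix.trace_smul,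
    Matrix.trace_smul]
  simp

lemma ne_zero_pair {α β : ℝ} (h : (α, β) ≠ ((0:ℝ), (0:ℝ))) : α ≠ 0 ∨ β ≠ 0 := by
  by_contra hc
  push_neg at hc
  exact h (by rw [hc.1, hc.2])

lemma qN_zero_on_range {N X : Matrix (Fin n) (Fin n) ℝ} (hN : N.PosSemidef) (hX : X.PosSemidef)
    (h0 : (N * X).trace = 0) (u : Fin n → ℝ) : qf N (X *ᵥ u) = 0 := by
  have hNX : N * X = 0 := (trace_psd_mul hN hX).2 h0
  have : N *ᵥ (X *ᵥ u) = 0 := by rw [Matrix.mulVec_mulVec, hNX, Matrix.zero_mulVec]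
  simp [qf, this]

lemma indep_of_pos_neg {A : Matrix (Fin n) (Fin n) ℝ} {a b : Fin n → ℝ}
    (ha : 0 < qf A a) (hb : qf A b < 0) : Indep a b := by
  intro r s hrs
  by_cases hs : s = 0
  · subst hs
    simp only [zero_smul, add_zero] at hrs
    rcases smul_eq_zero.mp hrs with h | h
    · exact ⟨h, rfl⟩
    · rw [h, qf_zero] at ha; exact absurd ha (lt_irrefl 0)
  · exfalso
    have hb' : b = (-r/s) • a := by
      have h1 : s • b = (-r) • a := by
        rw [neg_smul, eq_neg_iff_add_eq_zero, add_comm]; exact hrs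
      calc b = s⁻¹ • (s • b) := by rw [smul_smul, inv_mul_cancel₀ hs, one_smul]
      _ = s⁻¹ • ((-r) • a) := by rw [h1]
      _ = (-r/s) • a := by rw [smul_smul, div_eq_mul_inv, mul_comm]
    rw [hb', qf_smul] at hb
    nlinarith [sq_nonneg (-r/s)]

lemma signs_of_sum_zero {m : ℕ} {f : Fin m → ℝ} (hsum : ∑ l, f l = 0) {l0 : Fin m}
    (hl0 : f l0 ≠ 0) : (∃ l, 0 < f l) ∧ (∃ l, f l < 0) := by
  constructor
  · by_contra hc
    push_neg at hc
    have := (Finset.sum_eq_zero_iff_of_nonpos (fun l _ => hc l)).mp hsum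
    exact hl0 (this l0 (Finset.mem_univ l0))
  · by_contra hc
    push_neg at hc
    have := (Finset.sum_eq_zero_iff_of_nonneg (fun l _ => hc l)).mp hsum
    exact hl0 (this l0 (Finset.mem_univ l0))

lemma exists_pos_of_sum_pos {m : ℕ} {f : Fin m → ℝ} (hsum : 0 < ∑ l, f l) :
    ∃ l, 0 < f l := by
  by_contra hc
  push_neg at hc
  have : ∑ l, f l ≤ 0 := Finset.sum_nonpos (fun l _ => hc l)
  linarith

/-- vanishing of a symmetric form on a spanning set implies vanishing on the span -/
lemma qf_zero_on_span {A : Matrix (Fin n) (Fin n) ℝ} {S : Set (Fin n → ℝ)}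
    (h0 : ∀ a ∈ S, ∀ b ∈ S, a ⬝ᵥ A *ᵥ b = 0) :
    ∀ v ∈ Submodule.span ℝ S, qf A v = 0 := by
  have step1 : ∀ b ∈ S, ∀ v ∈ Submodule.span ℝ S, v ⬝ᵥ A *ᵥ b = 0 := by
    intro b hb v hv
    induction hv using Submodule.span_induction with
    | mem x hx => exact h0 x hx b hb
    | zero => simp
    | add x y _ _ hx hy => rw [add_dotProduct, hx, hy, add_zero]
    | smul r x _ hx => rw [smul_dotProduct, hx, smul_zero]
  have step2 : ∀ v ∈ Submodule.span ℝ S, ∀ w ∈ Submodule.span ℝ S, v ⬝ᵥ A *ᵥ w = 0 := by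
    intro v hv w hw
    induction hw using Submodule.span_induction with
    | mem x hx => exact step1 x hx v hv
    | zero => simp
    | add x y _ _ hx hy => rw [Matrix.mulVec_add, dotProduct_add, hx, hy, add_zero]
    | smul r x _ hx => rw [Matrix.mulVec_smul, dotProduct_smul, hx, smul_zero]
  intro v hv
  exact step2 v hv v hv

lemma qf_add' {A : Matrix (Fin n) (Fin n) ℝ} (u v : Fin n → ℝ) :
    qf A (u + v) = qf A u + (u ⬝ᵥ A *ᵥ v + v ⬝ᵥ A *ᵥ u) + qf A v := by
  simp only [qf, Matrix.mulVec_add, dotProduct_add, add_dotProduct]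
  ring

lemma qf_sub' {A : Matrix (Fin n) (Fin n) ℝ} (u v : Fin n → ℝ) :
    qf A (u - v) = qf A u - (u ⬝ᵥ A *ᵥ v + v ⬝ᵥ A *ᵥ u) + qf A v := by
  simp only [qf, Matrix.mulVec_sub, dotProduct_sub, sub_dotProduct]
  ring

/-- THE KEY LEMMA -/
lemma key_lemma {X : Matrix (Fin n) (Fin n) ℝ} (M : Fin k → Matrix (Fin n) (Fin n) ℝ)
    (hM : ∀ i, (M i).IsSymm)
    (hpair : ∀ i j : Fin k, i ≠ j →
      ∃ α β : ℝ, (α, β) ≠ (0, 0) ∧ (α • M i + β • M j).PosSemidef)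
    (hX : X.PosSemidef) (hXS : ∀ i, 0 ≤ (M i * X).trace)
    (hind : ∃ a b : Fin n → ℝ, a ∈ LinearMap.range X.mulVecLin ∧
      b ∈ LinearMap.range X.mulVecLin ∧ Indep a b) :
    ∃ x, x ∈ LinearMap.range X.mulVecLin ∧ x ≠ 0 ∧
      (∀ i, 0 ≤ qf (M i) x) ∧ (∀ i, (M i * X).trace = 0 → qf (M i) x = 0) := by
  classical
  obtain ⟨B, hB⟩ := posSemidef_iff_eq_transpose_mul_self.mp hX
  rw [conjTranspose_eq_transpose_of_trivial] at hB
  set V := LinearMap.range X.mulVecLin with hV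
  have hrow : ∀ l, B l ∈ V := by intro l; rw [hV, hB]; exact row_mem_range B l
  have htr : ∀ i, (M i * X).trace = ∑ l, qf (M i) (B l) := by
    intro i; rw [hB]; exact trace_formula _ B
  have hVmem : ∀ v ∈ V, ∃ u, X *ᵥ u = v := by
    intro v hv; obtain ⟨u, hu⟩ := hv; exact ⟨u, hu⟩
  have hVspan : (V : Set (Fin n → ℝ)) ⊆ (Submodule.span ℝ (Set.range B) : Set _) := by
    intro v hv
    have h1 : V ≤ LinearMap.range Bᵀ.mulVecLin := by
      rw [hV, hB]
      rintro x ⟨u, rfl⟩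
      exact ⟨B.mulVecLin u, by simp [Matrix.mulVecLin_mul]⟩
    have h2 := h1 hv
    rw [Matrix.range_mulVecLin] at h2
    exact h2
  have hvanish : ∀ (N : Matrix (Fin n) (Fin n) ℝ), N.PosSemidef → (N * X).trace = 0 →
      ∀ v ∈ V, qf N v = 0 := by
    intro N hN h0 v hv
    obtain ⟨u, hu⟩ := hVmem v hv
    rw [← hu]
    exact qN_zero_on_range hN hX h0 u
  by_cases hcase : ∃ i0, (M i0 * X).trace = 0 ∧ ∃ v ∈ V, qf (M i0) v ≠ 0
  · -- CASE 1 : some tight constraint has nonvanishing form on V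
    obtain ⟨i0, hti0, v, hvV, hqv⟩ := hcase
    obtain ⟨a, haV, b, hbV, hqa, hqb⟩ :
        ∃ a, a ∈ V ∧ ∃ b, b ∈ V ∧ 0 < qf (M i0) a ∧ qf (M i0) b < 0 := by
      by_cases hex : ∃ l, qf (M i0) (B l) ≠ 0
      · obtain ⟨l0, hl0⟩ := hex
        have hsum : ∑ l, qf (M i0) (B l) = 0 := by rw [← htr i0, hti0]
        obtain ⟨⟨lp, hlp⟩, ⟨lm, hlm⟩⟩ := signs_of_sum_zero hsum hl0
        exact ⟨B lp, hrow lp, B lm, hrow lm, hlp, hlm⟩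
      · push_neg at hex
        by_cases hbil : ∀ l m, (B l) ⬝ᵥ (M i0) *ᵥ (B m) = 0
        · exfalso
          apply hqv
          apply qf_zero_on_span (S := Set.range B) ?_ v (hVspan hvV)
          rintro p ⟨l, rfl⟩ p' ⟨m, rfl⟩
          exact hbil l m
        · push_neg at hbil
          obtain ⟨l, m, hlm⟩ := hbil
          have hsym := symm_dot (hM i0) (B l) (B m)
          have hqa1 : qf (M i0) (B l + B m) = 2 * ((B l) ⬝ᵥ (M i0) *ᵥ (B m)) := by
            rw [qf_add', hex l, hex m, ← hsym]; ring
          have hqb1 : qf (M i0) (B l - B m) = -(2 * ((B l) ⬝ᵥ (M i0) *ᵥ (B m))) := by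
            rw [qf_sub', hex l, hex m, ← hsym]; ring
          have hmem1 : B l + B m ∈ V := V.add_mem (hrow l) (hrow m)
          have hmem2 : B l - B m ∈ V := V.sub_mem (hrow l) (hrow m)
          rcases lt_or_gt_of_ne hlm with hw | hw
          · exact ⟨B l - B m, hmem2, B l + B m, hmem1, by rw [hqb1]; linarith,
              by rw [hqa1]; linarith⟩
          · exact ⟨B l + B m, hmem1, B l - B m, hmem2, by rw [hqa1]; linarith,
              by rw [hqb1]; linarith⟩
    -- IVT to find a zero of the form on V
    have hiab : Indep a b := indep_of_pos_neg hqa hqb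
    set f : ℝ → ℝ := fun s => qf (M i0) ((1 - s) • a + s • b) with hf
    have hpathc : Continuous (fun s : ℝ => (1 - s) • a + s • b) := by
      apply Continuous.add
      · exact (continuous_const.sub continuous_id).smul continuous_const
      · exact continuous_id.smul continuous_const
    have hfc : Continuous f := (qf_continuous (M i0)).comp hpathc
    have hf0 : f 0 = qf (M i0) a := by simp [hf]
    have hf1 : f 1 = qf (M i0) b := by simp [hf]
    have hivt := intermediate_value_Icc' (le_of_lt one_pos) hfc.continuousOn
    have h0mem : (0:ℝ) ∈ Icc (f 1) (f 0) := by
      rw [hf0, hf1]; exact ⟨le_of_lt hqb, le_of_lt hqa⟩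
    obtain ⟨s, _, hfs⟩ := hivt h0mem
    set x := (1 - s) • a + s • b with hx
    have hqx : qf (M i0) x = 0 := hfs
    have hxV : x ∈ V := V.add_mem (V.smul_mem _ haV) (V.smul_mem _ hbV)
    have hxne : x ≠ 0 := by
      intro h0
      obtain ⟨h1, h2⟩ := hiab (1 - s) s h0
      rw [h2, sub_zero] at h1
      exact one_ne_zero h1
    have hmain : ∀ i, 0 ≤ qf (M i) x ∧ ((M i * X).trace = 0 → qf (M i) x = 0) := by
      intro i
      by_cases hii : i = i0
      · subst hii; exact ⟨le_of_eq hqx.symm, fun _ => hqx⟩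
      obtain ⟨α, β, hne, hN⟩ := hpair i0 i (fun h => hii h.symm)
      by_cases hti : (M i * X).trace = 0
      · -- i is tight
        have htrN : ((α • M i0 + β • M i) * X).trace = 0 := by
          rw [trace_comb, hti0, hti]; ring
        have hvan := hvanish _ hN htrN
        by_cases hβ : β = 0
        · exfalso
          have hα : α ≠ 0 := (ne_zero_pair hne).resolve_right (not_not_intro hβ)
          have h1 := hvan a haV
          rw [qf_comb, hβ, zero_mul, add_zero] at h1
          rcases mul_eq_zero.mp h1 with h | h
          · exact hα h
          · exact absurd h (ne_of_gt hqa)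
        · have h1 := hvan x hxV
          rw [qf_comb, hqx, mul_zero, zero_add] at h1
          have hq0 : qf (M i) x = 0 := by
            rcases mul_eq_zero.mp h1 with h | h
            · exact absurd h hβ
            · exact h
          exact ⟨le_of_eq hq0.symm, fun _ => hq0⟩
      · -- i is not tight
        have htipos : 0 < (M i * X).trace := lt_of_le_of_ne (hXS i) (Ne.symm hti)
        have htrN : 0 ≤ ((α • M i0 + β • M i) * X).trace := (trace_psd_mul hN hX).1
        rw [trace_comb, hti0, mul_zero, zero_add] at htrN
        have hβ0 : 0 ≤ β := by nlinarith
        by_cases hβ : β = 0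
        · exfalso
          have hα : α ≠ 0 := (ne_zero_pair hne).resolve_right (not_not_intro hβ)
          have h1 := qf_nonneg hN a
          have h2 := qf_nonneg hN b
          rw [qf_comb, hβ, zero_mul, add_zero] at h1 h2
          rcases lt_or_gt_of_ne hα with h | h
          · nlinarith
          · nlinarith
        · have hβpos : 0 < β := lt_of_le_of_ne hβ0 (Ne.symm hβ)
          have h1 := qf_nonneg hN x
          rw [qf_comb, hqx, mul_zero, zero_add] at h1
          have hq : 0 ≤ qf (M i) x := by nlinarith
          exact ⟨hq, fun h => absurd h hti⟩
    exact ⟨x, hxV, hxne, fun i => (hmain i).1, fun i => (hmain i).2⟩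
  · -- CASE 2 : all tight constraints vanish on V
    push_neg at hcase
    obtain ⟨a, b, haV, hbV, hab⟩ := hind
    set T : Set (Fin n → ℝ) := {y | y ∈ V ∧ y ≠ 0} with hT
    have hTpre : IsPreconnected T := preconnected_punctured haV hbV hab
    have hTne : T.Nonempty := ⟨a, haV, indep_left_ne_zero hab⟩
    set J : Finset (Fin k) := Finset.univ.filter (fun j => (M j * X).trace ≠ 0) with hJ
    have htJ : ∀ j ∈ J, 0 < (M j * X).trace := by
      intro j hj
      have := (Finset.mem_filter.mp hj).2
      exact lt_of_le_of_ne (hXS j) (Ne.symm this)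
    set U : Fin k → Set (Fin n → ℝ) := fun j => {y | qf (M j) y < 0} with hU
    by_cases hcov : ∀ y ∈ T, ∃ j ∈ J, qf (M j) y < 0
    · exfalso
      have hcovset : T ⊆ ⋃ j ∈ J, U j := by
        intro y hy
        obtain ⟨j, hjJ, hjy⟩ := hcov y hy
        exact mem_biUnion hjJ hjy
      have hopen : ∀ j ∈ J, IsOpen (U j) := by
        intro j _
        exact isOpen_lt (qf_continuous (M j)) continuous_const
      have htri : ∀ i ∈ J, ∀ j ∈ J, i ≠ j → U i ⊆ U j ∨ U j ⊆ U i ∨ Disjoint (U i) (U j) := by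
        intro i hi j hj hij
        have hti := htJ i hi
        have htj := htJ j hj
        obtain ⟨α, β, hne, hN⟩ := hpair i j hij
        have htrN : 0 ≤ ((α • M i + β • M j) * X).trace := (trace_psd_mul hN hX).1
        rw [trace_comb] at htrN
        rcases lt_trichotomy α 0 with hα | hα | hα <;>
          rcases lt_trichotomy β 0 with hβ | hβ | hβ
        · exfalso; nlinarith
        · exfalso; rw [hβ] at htrN; nlinarith
        · refine Or.inr (Or.inl ?_)
          intro y hy
          simp only [hU, Set.mem_setOf_eq] at hy ⊢
          by_contra hc
          push_neg at hc
          have := qf_nonneg hN y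
          rw [qf_comb] at this
          nlinarith
        · exfalso; rw [hα] at htrN; nlinarith
        · exfalso
          rcases ne_zero_pair hne with h | h
          · exact absurd hα h
          · exact absurd hβ h
        · refine Or.inr (Or.inl ?_)
          intro y hy
          simp only [hU, Set.mem_setOf_eq] at hy
          exfalso
          have := qf_nonneg hN y
          rw [qf_comb, hα] at this
          nlinarith
        · refine Or.inl ?_
          intro y hy
          simp only [hU, Set.mem_setOf_eq] at hy ⊢
          by_contra hc
          push_neg at hc
          have := qf_nonneg hN y
          rw [qf_comb] at this
          nlinarith
        · refine Or.inl ?_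
          intro y hy
          simp only [hU, Set.mem_setOf_eq] at hy
          exfalso
          have := qf_nonneg hN y
          rw [qf_comb, hβ] at this
          nlinarith
        · refine Or.inr (Or.inr ?_)
          rw [Set.disjoint_left]
          intro y hyi hyj
          simp only [hU, Set.mem_setOf_eq] at hyi hyj
          have := qf_nonneg hN y
          rw [qf_comb] at this
          nlinarith
      obtain ⟨j, hjJ, hTU⟩ := cover_lemma hTpre hTne U J.card J le_rfl hopen htri hcovset
      have hsumpos : 0 < ∑ l, qf (M j) (B l) := by rw [← htr j]; exact htJ j hjJ
      obtain ⟨l, hl⟩ := exists_pos_of_sum_pos hsumpos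
      have hBlne : B l ≠ 0 := by
        intro h0; rw [h0, qf_zero] at hl; exact lt_irrefl 0 hl
      have hmem : B l ∈ T := ⟨hrow l, hBlne⟩
      have hlt := hTU hmem
      simp only [hU, Set.mem_setOf_eq] at hlt
      linarith
    · push_neg at hcov
      obtain ⟨x, hxT, hxge⟩ := hcov
      refine ⟨x, hxT.1, hxT.2, ?_, ?_⟩
      · intro i
        by_cases hti : (M i * X).trace = 0
        · exact le_of_eq (hcase i hti x hxT.1).symm
        · exact hxge i (Finset.mem_filter.mpr ⟨Finset.mem_univ i, hti⟩)
      · intro i hti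
        exact hcase i hti x hxT.1


lemma smul_psd_mem_SR (M : Fin k → Matrix (Fin n) (Fin n) ℝ) {t : ℝ} (ht : 0 ≤ t)
    {x : Fin n → ℝ} (hx : ∀ i, 0 ≤ qf (M i) x) :
    t • vecMulVec x x ∈ SCone (Set.range M) ∩ RankOneSet n := by
  have heq : t • vecMulVec x x = vecMulVec (Real.sqrt t • x) (Real.sqrt t • x) := by
    rw [vecMulVec_smul_smul, Real.sq_sqrt ht]
  rw [heq]
  refine ⟨⟨vecMulVec_posSemidef _, ?_⟩, _, rfl⟩
  rintro N ⟨i, rfl⟩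
  rw [qf_vecMulVec, qf_smul]
  have := hx i
  positivity

lemma double_mem (M : Fin k → Matrix (Fin n) (Fin n) ℝ) :
    ∀ Z ∈ SCone (Set.range M) ∩ RankOneSet n,
      (2:ℝ) • Z ∈ SCone (Set.range M) ∩ RankOneSet n := by
  rintro Z ⟨⟨hZpsd, hZtr⟩, z, rfl⟩
  have heq : (2:ℝ) • vecMulVec z z = vecMulVec (Real.sqrt 2 • z) (Real.sqrt 2 • z) := by
    rw [vecMulVec_smul_smul, Real.sq_sqrt (by norm_num : (0:ℝ) ≤ 2)]
  rw [heq]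
  refine ⟨⟨vecMulVec_posSemidef _, ?_⟩, _, rfl⟩
  rintro N hN
  rw [qf_vecMulVec, qf_smul, Real.sq_sqrt (by norm_num : (0:ℝ) ≤ 2)]
  have h1 := hZtr N hN
  rw [qf_vecMulVec] at h1
  linarith

/-- measure for the induction -/
def mea (M : Fin k → Matrix (Fin n) (Fin n) ℝ) (X : Matrix (Fin n) (Fin n) ℝ) : ℕ :=
  (n - Module.finrank ℝ (LinearMap.ker X.mulVecLin)) +
    (Finset.univ.filter (fun i => (M i * X).trace ≠ 0)).card

lemma main_step (M : Fin k → Matrix (Fin n) (Fin n) ℝ) (hM : ∀ i, (M i).IsSymm)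
    (hpair : ∀ i j : Fin k, i ≠ j →
      ∃ α β : ℝ, (α, β) ≠ (0, 0) ∧ (α • M i + β • M j).PosSemidef) :
    ∀ (N : ℕ) (X : Matrix (Fin n) (Fin n) ℝ), mea M X < N →
      X.PosSemidef → (∀ i, 0 ≤ (M i * X).trace) →
      X ∈ convexHull ℝ (SCone (Set.range M) ∩ RankOneSet n) := by
  classical
  intro N
  induction N with
  | zero => intro X h; omega
  | succ N ih =>
    intro X hmea hX hXS
    by_cases hind : ∃ a b : Fin n → ℝ, a ∈ LinearMap.range X.mulVecLin ∧
        b ∈ LinearMap.range X.mulVecLin ∧ Indep a b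
    case neg =>
      obtain ⟨x, hx⟩ := psd_rank_le_one hX (by
        intro a ha b hb hab
        exact hind ⟨a, b, ha, hb, hab⟩)
      apply subset_convexHull
      refine ⟨⟨hX, ?_⟩, x, hx⟩
      rintro Nm ⟨i, rfl⟩
      exact hXS i
    case pos =>
      obtain ⟨x, hxV, hxne, hge, heq⟩ := key_lemma M hM hpair hX hXS hind
      obtain ⟨w, hwv⟩ := hxV
      rw [Matrix.mulVecLin_apply] at hwv
      have hc : 0 < w ⬝ᵥ X *ᵥ w := by
        rcases lt_or_eq_of_le (qf_nonneg hX w) with h | h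
        · exact h
        · exfalso
          apply hxne
          rw [← hwv]
          exact mulVec_eq_zero hX h.symm
      set c := w ⬝ᵥ X *ᵥ w with hcdef
      set tset : Finset ℝ := insert c⁻¹ ((Finset.univ.filter (fun j => 0 < qf (M j) x)).image
        (fun j => (M j * X).trace / qf (M j) x)) with htset
      have htne : tset.Nonempty := ⟨c⁻¹, Finset.mem_insert_self _ _⟩
      set t := tset.min' htne with htdef
      have hnontight : ∀ j, 0 < qf (M j) x → 0 < (M j * X).trace := by
        intro j hj
        rcases lt_or_eq_of_le (hXS j) with h | h
        · exact h
        · exfalso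
          rw [heq j h.symm] at hj
          exact lt_irrefl 0 hj
      have htpos : 0 < t := by
        have hmem := Finset.mem_insert.mp (tset.min'_mem htne)
        show (0:ℝ) < tset.min' htne
        rcases hmem with h | h
        · rw [h]; exact inv_pos.mpr hc
        · rw [Finset.mem_image] at h
          obtain ⟨j, hj, hjt⟩ := h
          rw [Finset.mem_filter] at hj
          rw [← hjt]
          exact div_pos (hnontight j hj.2) hj.2
      have htc : t ≤ c⁻¹ := Finset.min'_le _ _ (Finset.mem_insert_self _ _)
      have htj : ∀ j, 0 < qf (M j) x → t ≤ (M j * X).trace / qf (M j) x := by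
        intro j hj
        apply Finset.min'_le
        rw [htset]
        apply Finset.mem_insert_of_mem
        exact Finset.mem_image_of_mem _ (Finset.mem_filter.mpr ⟨Finset.mem_univ j, hj⟩)
      set X' := X - t • vecMulVec x x with hX'def
      have hX'psd : X'.PosSemidef := by
        rw [hX'def, ← hwv]
        exact schur_psd hX w htpos.le hc htc
      have htrX' : ∀ i, (M i * X').trace = (M i * X).trace - t * qf (M i) x := by
        intro i
        rw [hX'def, Matrix.mul_sub, Matrix.trace_sub, Matrix.mul_smul, Matrix.trace_smul,
          qf_vecMulVec, smul_eq_mul]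
      have hgeX' : ∀ i, 0 ≤ (M i * X').trace := by
        intro i
        rw [htrX' i]
        rcases lt_or_eq_of_le (hge i) with h | h
        · have h2 := htj i h
          rw [le_div_iff₀ h] at h2
          linarith
        · rw [← h, mul_zero, sub_zero]
          exact hXS i
      have htight : ∀ i, (M i * X).trace = 0 → (M i * X').trace = 0 := by
        intro i h0
        rw [htrX' i, h0, heq i h0, mul_zero, sub_zero]
      have hker : ∀ u, X *ᵥ u = 0 → X' *ᵥ u = 0 := by
        intro u hu
        have hxu : x ⬝ᵥ u = 0 := by
          rw [← hwv, dotProduct_comm, symm_dot (psd_symm hX) u w, hu, dotProduct_zero]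
        rw [hX'def, Matrix.sub_mulVec, hu, smul_mulVec, vecMulVec_mulVec, hxu,
          zero_smul, smul_zero, sub_zero]
      have hkerle : LinearMap.ker X.mulVecLin ≤ LinearMap.ker X'.mulVecLin := by
        intro u hu
        rw [LinearMap.mem_ker, Matrix.mulVecLin_apply] at hu ⊢
        exact hker u hu
      have hcardle : (Finset.univ.filter (fun i => (M i * X').trace ≠ 0)) ⊆
          (Finset.univ.filter (fun i => (M i * X).trace ≠ 0)) := by
        intro i hi
        rw [Finset.mem_filter] at hi ⊢
        refine ⟨Finset.mem_univ i, ?_⟩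
        intro h0
        exact hi.2 (htight i h0)
      have hfrle : Module.finrank ℝ (LinearMap.ker X'.mulVecLin) ≤ n := by
        have h1 := Submodule.finrank_le (LinearMap.ker X'.mulVecLin)
        rwa [Module.finrank_fin_fun] at h1
      have hmea' : mea M X' < mea M X := by
        have hmemt := Finset.mem_insert.mp (tset.min'_mem htne)
        rcases hmemt with hcase1 | hcase2
        · -- kernel grows
          have hwk : X' *ᵥ w = 0 := by
            have hxw : x ⬝ᵥ w = c := by
              rw [dotProduct_comm, ← hwv]
            have ht' : t = c⁻¹ := hcase1
            rw [hX'def, Matrix.sub_mulVec, hwv, smul_mulVec, vecMulVec_mulVec, hxw,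
              ht', smul_smul, inv_mul_cancel₀ (ne_of_gt hc), one_smul, sub_self]
          have hwker' : w ∈ LinearMap.ker X'.mulVecLin := by
            rw [LinearMap.mem_ker, Matrix.mulVecLin_apply]; exact hwk
          have hwnker : w ∉ LinearMap.ker X.mulVecLin := by
            rw [LinearMap.mem_ker, Matrix.mulVecLin_apply, hwv]
            exact hxne
          have hlt : LinearMap.ker X.mulVecLin < LinearMap.ker X'.mulVecLin :=
            lt_of_le_of_ne hkerle (fun hE => hwnker (hE ▸ hwker'))
          have hfr := Submodule.finrank_lt_finrank_of_lt hlt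
          have hcard := Finset.card_le_card hcardle
          unfold mea; omega
        · -- a new tight constraint appears
          obtain ⟨j, hjf, hjt⟩ := Finset.mem_image.mp hcase2
          rw [Finset.mem_filter] at hjf
          have hq := hjf.2
          have hnew : (M j * X').trace = 0 := by
            have ht' : t = (M j * X).trace / qf (M j) x := hjt.symm
            rw [htrX' j, ht', div_mul_cancel₀ _ (ne_of_gt hq), sub_self]
          have hjmem : j ∈ Finset.univ.filter (fun i => (M i * X).trace ≠ 0) :=
            Finset.mem_filter.mpr ⟨Finset.mem_univ j, ne_of_gt (hnontight j hq)⟩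
          have hjnot : j ∉ Finset.univ.filter (fun i => (M i * X').trace ≠ 0) := by
            rw [Finset.mem_filter]
            rintro ⟨-, hh⟩
            exact hh hnew
          have hss := (Finset.ssubset_iff_of_subset hcardle).mpr ⟨j, hjmem, hjnot⟩
          have hcard := Finset.card_lt_card hss
          have hfr := Submodule.finrank_mono hkerle
          unfold mea; omega
      have hIH := ih X' (by omega) hX'psd hgeX'
      have hpart := smul_psd_mem_SR M htpos.le hge
      have hXeq : X = X' + t • vecMulVec x x := by rw [hX'def, sub_add_cancel]
      rw [hXeq]
      exact add_mem_convexHull (double_mem M) hIH (subset_convexHull ℝ _ hpart)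


lemma sconvex (𝓜 : Set (Matrix (Fin n) (Fin n) ℝ)) : Convex ℝ (SCone 𝓜) := by
  intro X hXm Y hYm a b ha hb hab
  obtain ⟨hXp, hXt⟩ := hXm
  obtain ⟨hYp, hYt⟩ := hYm
  refine ⟨Matrix.PosSemidef.of_dotProduct_mulVec_nonneg ?_ ?_, ?_⟩
  · rw [Matrix.IsHermitian, conjTranspose_eq_transpose_of_trivial, transpose_add,
      transpose_smul, transpose_smul, psd_symm hXp, psd_symm hYp]
  · intro u
    simp only [star_trivial, Matrix.add_mulVec, Matrix.smul_mulVec, dotProduct_add,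
      dotProduct_smul, smul_eq_mul]
    have h1 := hXp.dotProduct_mulVec_nonneg u
    have h2 := hYp.dotProduct_mulVec_nonneg u
    simp only [star_trivial] at h1 h2
    exact add_nonneg (mul_nonneg ha h1) (mul_nonneg hb h2)
  · intro Nm hNm
    rw [Matrix.mul_add, Matrix.mul_smul, Matrix.mul_smul, Matrix.trace_add, Matrix.trace_smul,
      Matrix.trace_smul, smul_eq_mul, smul_eq_mul]
    exact add_nonneg (mul_nonneg ha (hXt Nm hNm)) (mul_nonneg hb (hYt Nm hNm))


end ROG

theorem stmt_11 {n k : ℕ} (hk : 2 ≤ k) (M : Fin k → Matrix (Fin n) (Fin n) ℝ)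
    (hM : ∀ i, (M i).IsSymm)
    (h : ∀ i j : Fin k, i ≠ j →
      ∃ α β : ℝ, (α, β) ≠ (0, 0) ∧ (α • M i + β • M j).PosSemidef) :
    IsROG (SCone (Set.range M)) := by
  apply Set.Subset.antisymm
  · intro X hX
    have hXS : ∀ i, 0 ≤ (M i * X).trace := fun i => hX.2 (M i) ⟨i, rfl⟩
    exact ROG.main_step M hM h (ROG.mea M X + 1) X (Nat.lt_succ_self _) hX.1 hXS
  · exact convexHull_min Set.inter_subset_left (ROG.sconvex _)
end
end
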